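/- arXiv:1512.03868 — 10 statements merged into one kernel-verified Lean document; each statement's English description precedes it below -/
import Mathlib

section
/- Let A = (D, ∇, ⊢) be an algebraic information system. Then the associated domain |A|, ordered by inclusion, is an algebraic Scott domain: it is directed complete (with least element the deductive closure of ∅), bounded complete (every subset of |A| that has an upper bound in |A| has a least upper bound in |A|), and algebraic (for every x ∈ |A|, the set of compact elements of |A| below x is directed and its least upper bound is x). -/
/-- An algebraic information system: a set of tokens `D`, a false statement `nabla`,
and an entailment relation between finite subsets of `D`. -/
structure AlgInfoSys (D : Type*) where
  nabla : D
  entails : Set D → Set D → Prop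
  entails_finite : ∀ u v : Set D, entails u v → u.Finite ∧ v.Finite
  nondegen : ¬ entails ∅ {nabla}
  refl : ∀ u v : Set D, u.Finite → v ⊆ u → entails u v
  trans : ∀ (u w : Set D) (V : Set (Set D)), V.Finite →
    (∀ v ∈ V, entails u v) → entails (⋃₀ V) w → entails u w
  contra : ∀ u : Set D, u.Finite → entails {nabla} u

/-- A theory (element of the associated domain `|A|`): a consistent, deductively
closed set of tokens. -/
def AlgInfoSys.IsElement {D : Type*} (A : AlgInfoSys D) (x : Set D) : Prop :=
  A.nabla ∉ x ∧ ∀ u v : Set D, u ⊆ x → A.entails u v → v ⊆ x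

/-- The deductive closure of a set of tokens. -/
def AlgInfoSys.closure {D : Type*} (A : AlgInfoSys D) (x : Set D) : Set D :=
  {d | ∃ u : Set D, u ⊆ x ∧ A.entails u {d}}

/-- `x` is way below `y` in a preorder. -/
def wayBelow {α : Type*} [Preorder α] (x y : α) : Prop :=
  ∀ S : Set α, S.Nonempty → DirectedOn (· ≤ ·) S → ∀ b : α, IsLUB S b → y ≤ b → ∃ s ∈ S, x ≤ s

/-- A directed complete partial order: every directed subset (including `∅`) has a lub. -/
def IsDcpo (α : Type*) [Preorder α] : Prop :=
  ∀ S : Set α, DirectedOn (· ≤ ·) S → ∃ b, IsLUB S b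

/-- Bounded completeness: every subset with an upper bound has a least upper bound. -/
def BoundedComplete (α : Type*) [Preorder α] : Prop :=
  ∀ S : Set α, (∃ b, ∀ s ∈ S, s ≤ b) → ∃ m, IsLUB S m

/-- Algebraicity: for every element, the set of compact elements below it is
directed with least upper bound the element itself. -/
def IsAlgebraicDom (α : Type*) [Preorder α] : Prop :=
  ∀ a : α, ({k : α | wayBelow k k ∧ k ≤ a}).Nonempty ∧
    DirectedOn (· ≤ ·) {k : α | wayBelow k k ∧ k ≤ a} ∧
    IsLUB {k : α | wayBelow k k ∧ k ≤ a} a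

namespace AlgInfoSys
variable {D : Type*} (A : AlgInfoSys D)

lemma entails_mono {u u' v : Set D} (h : A.entails u v) (hsub : u ⊆ u')
    (hf : u'.Finite) : A.entails u' v := by
  apply A.trans u' v {u} (Set.finite_singleton u)
  · intro w hw
    rw [Set.mem_singleton_iff] at hw
    exact hw ▸ A.refl u' u hf hsub
  · rwa [Set.sUnion_singleton]

lemma subset_closure (x : Set D) : x ⊆ A.closure x := by
  intro d hd
  exact ⟨{d}, Set.singleton_subset_iff.2 hd,
    A.refl {d} {d} (Set.finite_singleton d) subset_rfl⟩

lemma closure_mono {x y : Set D} (h : x ⊆ y) : A.closure x ⊆ A.closure y := by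
  rintro d ⟨u, hu, he⟩
  exact ⟨u, hu.trans h, he⟩

lemma closure_subset_self {x : Set D} (hx : A.IsElement x) : A.closure x ⊆ x := by
  rintro d ⟨u, hu, he⟩
  exact hx.2 u {d} hu he rfl

lemma closure_closed {x u v : Set D} (hu : u ⊆ A.closure x) (h : A.entails u v) :
    v ⊆ A.closure x := by
  obtain ⟨hufin, hvfin⟩ := A.entails_finite u v h
  choose w hw hwe using fun (e : u) => hu e.2
  set W : Set D := ⋃ e : u, w e with hW
  have hWx : W ⊆ x := Set.iUnion_subset fun e => hw e
  have hWfin : W.Finite := by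
    haveI := hufin.fintype
    exact Set.finite_iUnion fun e => (A.entails_finite _ _ (hwe e)).1
  have hWe : ∀ e : u, A.entails W {(e : D)} :=
    fun e => A.entails_mono (hwe e) (Set.subset_iUnion _ e) hWfin
  have hWu : ∀ s ∈ (fun (e : D) => ({e} : Set D)) '' u, A.entails W s := by
    rintro s ⟨e, he, rfl⟩
    exact hWe ⟨e, he⟩
  have hWv : A.entails W v := by
    apply A.trans W v _ (hufin.image _) hWu
    have : ⋃₀ ((fun (e : D) => ({e} : Set D)) '' u) = u := by
      simp [Set.sUnion_image]
    rwa [this]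
  intro d hd
  refine ⟨W, hWx, ?_⟩
  apply A.trans W {d} {v} (Set.finite_singleton v)
  · rintro s hs; rw [Set.mem_singleton_iff] at hs; subst hs; exact hWv
  · rw [Set.sUnion_singleton]
    exact A.refl v {d} hvfin (Set.singleton_subset_iff.2 hd)

lemma isElement_closure {x : Set D} (h : A.nabla ∉ A.closure x) :
    A.IsElement (A.closure x) :=
  ⟨h, fun u v hu he => A.closure_closed hu he⟩

lemma isElement_closure_of_subset {x y : Set D} (hx : A.IsElement x) (h : y ⊆ x) :
    A.IsElement (A.closure y) := by
  have hsub : A.closure y ⊆ x := (A.closure_mono h).trans (A.closure_subset_self hx)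
  exact A.isElement_closure fun hn => hx.1 (hsub hn)

lemma finite_subset_sUnion {S : Set (Set D)} (hS : S.Nonempty)
    (hdir : DirectedOn (· ⊆ ·) S) {u : Set D} (hu : u.Finite)
    (hsub : u ⊆ ⋃₀ S) : ∃ s ∈ S, u ⊆ s := by
  refine Set.Finite.induction_on (motive := fun t _ => t ⊆ ⋃₀ S → ∃ s ∈ S, t ⊆ s) u hu
    (fun _ => ⟨hS.choose, hS.choose_spec, Set.empty_subset _⟩) ?_ hsub
  intro a t _ _ ih hsub'
  obtain ⟨s, hs, hts⟩ := ih ((Set.subset_insert a t).trans hsub')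
  obtain ⟨s', hs', has'⟩ := hsub' (Set.mem_insert a t)
  obtain ⟨s'', hs'', h1, h2⟩ := hdir s hs s' hs'
  exact ⟨s'', hs'', Set.insert_subset (h2 has') (hts.trans h1)⟩

end AlgInfoSys

namespace AlgInfoSys
variable {D : Type*} (A : AlgInfoSys D)

lemma directed_image {S : Set {x : Set D // A.IsElement x}}
    (hdir : DirectedOn (· ≤ ·) S) : DirectedOn (· ⊆ ·) (Subtype.val '' S) := by
  rintro _ ⟨a, ha, rfl⟩ _ ⟨b, hb, rfl⟩
  obtain ⟨c, hc, h1, h2⟩ := hdir a ha b hb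
  exact ⟨c.val, Set.mem_image_of_mem _ hc, h1, h2⟩

lemma isElement_sUnion {S : Set {x : Set D // A.IsElement x}} (hS : S.Nonempty)
    (hdir : DirectedOn (· ≤ ·) S) : A.IsElement (⋃₀ (Subtype.val '' S)) := by
  constructor
  · rintro ⟨t, ⟨s, hs, rfl⟩, hn⟩
    exact s.2.1 hn
  · intro u v hu he
    obtain ⟨s, hs, hus⟩ := finite_subset_sUnion (hS.image _) (A.directed_image hdir)
      (A.entails_finite u v he).1 hu
    obtain ⟨a, ha, rfl⟩ := hs
    exact (a.2.2 u v hus he).trans (Set.subset_sUnion_of_mem (Set.mem_image_of_mem _ ha))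

lemma isLUB_sUnion {S : Set {x : Set D // A.IsElement x}} (hS : S.Nonempty)
    (hdir : DirectedOn (· ≤ ·) S) :
    IsLUB S ⟨⋃₀ (Subtype.val '' S), A.isElement_sUnion hS hdir⟩ := by
  constructor
  · intro s hs
    show s.val ⊆ ⋃₀ (Subtype.val '' S)
    exact Set.subset_sUnion_of_mem (Set.mem_image_of_mem _ hs)
  · intro c hc
    show ⋃₀ (Subtype.val '' S) ⊆ c.val
    apply Set.sUnion_subset
    rintro _ ⟨a, ha, rfl⟩
    exact hc ha

lemma compact_of_closure {u : Set D} (hu : u.Finite) (h : A.IsElement (A.closure u)) :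
    wayBelow (α := {x : Set D // A.IsElement x}) ⟨A.closure u, h⟩ ⟨A.closure u, h⟩ := by
  intro S hS hdir b hb hle
  have hbeq : b = ⟨⋃₀ (Subtype.val '' S), A.isElement_sUnion hS hdir⟩ :=
    hb.unique (A.isLUB_sUnion hS hdir)
  subst hbeq
  have husub : u ⊆ ⋃₀ (Subtype.val '' S) := (A.subset_closure u).trans hle
  obtain ⟨s, hs, hus⟩ := finite_subset_sUnion (hS.image _) (A.directed_image hdir) hu husub
  obtain ⟨a, ha, rfl⟩ := hs
  refine ⟨a, ha, ?_⟩
  show A.closure u ⊆ a.val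
  exact (A.closure_mono hus).trans (A.closure_subset_self a.2)

lemma exists_finite_of_compact {k : {x : Set D // A.IsElement x}}
    (hk : wayBelow k k) : ∃ u : Set D, u.Finite ∧ u ⊆ k.val ∧ k.val = A.closure u := by
  have helem : ∀ u : Set D, u ⊆ k.val → A.IsElement (A.closure u) :=
    fun u hu => A.isElement_closure_of_subset k.2 hu
  set S : Set {x : Set D // A.IsElement x} :=
    {y | ∃ u : Set D, u.Finite ∧ u ⊆ k.val ∧ y.val = A.closure u} with hSdef
  have hS : S.Nonempty :=
    ⟨⟨A.closure ∅, helem ∅ (Set.empty_subset _)⟩,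
      ∅, Set.finite_empty, Set.empty_subset _, rfl⟩
  have hdir : DirectedOn (· ≤ ·) S := by
    rintro a ⟨u1, hu1f, hu1, ha⟩ b ⟨u2, hu2f, hu2, hb⟩
    refine ⟨⟨A.closure (u1 ∪ u2), helem _ (Set.union_subset hu1 hu2)⟩,
      ⟨u1 ∪ u2, hu1f.union hu2f, Set.union_subset hu1 hu2, rfl⟩, ?_, ?_⟩
    · show a.val ⊆ A.closure (u1 ∪ u2)
      rw [ha]; exact A.closure_mono Set.subset_union_left
    · show b.val ⊆ A.closure (u1 ∪ u2)
      rw [hb]; exact A.closure_mono Set.subset_union_right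
  have hlub : IsLUB S k := by
    constructor
    · rintro a ⟨u, huf, hu, ha⟩
      show a.val ⊆ k.val
      rw [ha]
      exact (A.closure_mono hu).trans (A.closure_subset_self k.2)
    · intro c hc
      show k.val ⊆ c.val
      intro d hd
      have hmem : (⟨A.closure {d}, helem _ (Set.singleton_subset_iff.2 hd)⟩ :
          {x : Set D // A.IsElement x}) ∈ S :=
        ⟨{d}, Set.finite_singleton d, Set.singleton_subset_iff.2 hd, rfl⟩
      exact hc hmem (A.subset_closure {d} (Set.mem_singleton d))
  obtain ⟨s, ⟨u, huf, hu, hs⟩, hks⟩ := hk S hS hdir k hlub le_rfl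
  refine ⟨u, huf, hu, Set.Subset.antisymm (hs ▸ hks) ?_⟩
  exact (A.closure_mono hu).trans (A.closure_subset_self k.2)

end AlgInfoSys

/-- the domain `|A|` of an algebraic information system, ordered by
inclusion, is an algebraic Scott domain: directed complete with least element the
deductive closure of `∅`, bounded complete, and algebraic. -/
theorem stmt2 {D : Type*} (A : AlgInfoSys D) :
    (A.IsElement (A.closure ∅) ∧ ∀ x : Set D, A.IsElement x → A.closure ∅ ⊆ x) ∧
    IsDcpo {x : Set D // A.IsElement x} ∧
    BoundedComplete {x : Set D // A.IsElement x} ∧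
    IsAlgebraicDom {x : Set D // A.IsElement x} := by
  have hbot : A.IsElement (A.closure ∅) := by
    apply A.isElement_closure
    rintro ⟨u, hu, he⟩
    exact A.nondegen (by rwa [Set.subset_empty_iff.mp hu] at he)
  have hleast : ∀ x : Set D, A.IsElement x → A.closure ∅ ⊆ x := by
    rintro x hx d ⟨u, hu, he⟩
    exact hx.2 u {d} (hu.trans (Set.empty_subset x)) he rfl
  refine ⟨⟨hbot, hleast⟩, ?_, ?_, ?_⟩
  · -- Dcpo
    intro S hdir
    rcases S.eq_empty_or_nonempty with rfl | hS
    · refine ⟨⟨A.closure ∅, hbot⟩, ?_, ?_⟩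
      · intro s hs; exact absurd hs (Set.notMem_empty s)
      · intro c _
        show A.closure ∅ ⊆ c.val
        exact hleast c.val c.2
    · exact ⟨_, A.isLUB_sUnion hS hdir⟩
  · -- BoundedComplete
    rintro S ⟨b, hb⟩
    have hsub : ⋃₀ (Subtype.val '' S) ⊆ b.val := by
      apply Set.sUnion_subset
      rintro _ ⟨a, ha, rfl⟩
      exact hb a ha
    refine ⟨⟨A.closure (⋃₀ (Subtype.val '' S)),
      A.isElement_closure_of_subset b.2 hsub⟩, ?_, ?_⟩
    · intro s hs
      show s.val ⊆ A.closure (⋃₀ (Subtype.val '' S))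
      exact (Set.subset_sUnion_of_mem (Set.mem_image_of_mem _ hs)).trans (A.subset_closure _)
    · intro c hc
      show A.closure (⋃₀ (Subtype.val '' S)) ⊆ c.val
      have h2 : ⋃₀ (Subtype.val '' S) ⊆ c.val := by
        apply Set.sUnion_subset
        rintro _ ⟨a, ha, rfl⟩
        exact hc ha
      exact (A.closure_mono h2).trans (A.closure_subset_self c.2)
  · -- Algebraic
    intro a
    have hsing : ∀ d ∈ a.val, A.IsElement (A.closure {d}) :=
      fun d hd => A.isElement_closure_of_subset a.2 (Set.singleton_subset_iff.2 hd)
    refine ⟨?_, ?_, ?_, ?_⟩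
    · refine ⟨⟨A.closure ∅, hbot⟩, ?_, hleast a.val a.2⟩
      intro S hS _ b _ _
      obtain ⟨s, hs⟩ := hS
      exact ⟨s, hs, hleast s.val s.2⟩
    · rintro k1 ⟨hc1, h1⟩ k2 ⟨hc2, h2⟩
      obtain ⟨u1, hu1f, hu1, he1⟩ := A.exists_finite_of_compact hc1
      obtain ⟨u2, hu2f, hu2, he2⟩ := A.exists_finite_of_compact hc2
      have hsub : u1 ∪ u2 ⊆ a.val :=
        Set.union_subset (hu1.trans h1) (hu2.trans h2)
      have helem : A.IsElement (A.closure (u1 ∪ u2)) :=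
        A.isElement_closure_of_subset a.2 hsub
      refine ⟨⟨A.closure (u1 ∪ u2), helem⟩,
        ⟨A.compact_of_closure (hu1f.union hu2f) helem, ?_⟩, ?_, ?_⟩
      · show A.closure (u1 ∪ u2) ⊆ a.val
        exact (A.closure_mono hsub).trans (A.closure_subset_self a.2)
      · show k1.val ⊆ A.closure (u1 ∪ u2)
        rw [he1]; exact A.closure_mono Set.subset_union_left
      · show k2.val ⊆ A.closure (u1 ∪ u2)
        rw [he2]; exact A.closure_mono Set.subset_union_right
    · rintro k ⟨_, hk⟩
      exact hk
    · intro c hc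
      show a.val ⊆ c.val
      intro d hd
      have hmem : (⟨A.closure {d}, hsing d hd⟩ : {x : Set D // A.IsElement x}) ∈
          {k : {x : Set D // A.IsElement x} | wayBelow k k ∧ k ≤ a} := by
        refine ⟨A.compact_of_closure (Set.finite_singleton d) (hsing d hd), ?_⟩
        show A.closure {d} ⊆ a.val
        exact (A.closure_mono (Set.singleton_subset_iff.2 hd)).trans
          (A.closure_subset_self a.2)
      exact hc hmem (A.subset_closure {d} (Set.mem_singleton d))
end

section
/- Let A and B be algebraic information systems and let f be an approximable mapping between A and B. Define |f| : |A| → |B| by |f|(x) = {d ∈ D_B | there is a finite u ⊆ x with u f {d}}. Then |f| is correctly defined (for every x ∈ |A|, |f|(x) is an element of |B|) and Scott continuous: |f| is monotone with respect to inclusion, and for every directed family S ⊆ |A|, |f|(⋃S) = ⋃_{s∈S} |f|(s). -/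
/-- An approximable mapping (input-output inference relation) between two
algebraic information systems. -/
structure ApproxMapping {D₁ D₂ : Type*} (A : AlgInfoSys D₁) (B : AlgInfoSys D₂) where
  rel : Set D₁ → Set D₂ → Prop
  rel_finite : ∀ u v, rel u v → u.Finite ∧ v.Finite
  nontriv : rel ∅ ∅
  consistent : ∀ u : Set D₁, u.Finite → ¬ A.entails u {A.nabla} → ¬ rel u {B.nabla}
  inconsistent : rel {A.nabla} {B.nabla}
  accum : ∀ (u : Set D₁) (V : Set (Set D₂)), V.Finite → V.Nonempty →
    (∀ v ∈ V, rel u v) → rel u (⋃₀ V)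
  trans : ∀ (u' u : Set D₁) (v v' : Set D₂),
    A.entails u' u → rel u v → B.entails v v' → rel u' v'

/-- The function on domains associated with an approximable mapping. -/
def ApproxMapping.app {D₁ D₂ : Type*} {A : AlgInfoSys D₁} {B : AlgInfoSys D₂}
    (f : ApproxMapping A B) (x : Set D₁) : Set D₂ :=
  {d | ∃ u : Set D₁, u ⊆ x ∧ f.rel u {d}}



lemma directed_finite_subset {D : Type*} {S : Set (Set D)} (hS : S.Nonempty)
    (hdir : DirectedOn (· ⊆ ·) S) {u : Set D} (hufin : u.Finite)
    (hu : u ⊆ ⋃₀ S) : ∃ s ∈ S, u ⊆ s := by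
  revert hu
  refine Set.Finite.induction_on (motive := fun u _ => u ⊆ ⋃₀ S → ∃ s ∈ S, u ⊆ s) u hufin
    (fun _ => ⟨hS.choose, hS.choose_spec, by simp⟩) ?_
  intro a t _ _ ih hu
  obtain ⟨s₂, hs₂, hts₂⟩ := ih (fun d hd => hu (Set.mem_insert_of_mem _ hd))
  obtain ⟨s₁, hs₁, has₁⟩ := hu (Set.mem_insert a t)
  obtain ⟨s₃, hs₃, h13, h23⟩ := hdir s₁ hs₁ s₂ hs₂
  exact ⟨s₃, hs₃, Set.insert_subset (h13 has₁) (hts₂.trans h23)⟩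

lemma entails_single {D : Type*} (B : AlgInfoSys D) {u v : Set D}
    (h : B.entails u v) {e : D} (he : e ∈ v) : B.entails u {e} := by
  have hvfin := (B.entails_finite _ _ h).2
  refine B.trans u {e} {v} (Set.finite_singleton v) (by simpa) ?_
  rw [Set.sUnion_singleton]
  exact B.refl v {e} hvfin (by simpa)

lemma app_rel_whole {D₁ D₂ : Type*} {A : AlgInfoSys D₁} {B : AlgInfoSys D₂}
    (f : ApproxMapping A B) {x : Set D₁} {u : Set D₂}
    (hufin : u.Finite) (hu : u ⊆ f.app x) :
    ∃ W : Set D₁, W ⊆ x ∧ W.Finite ∧ f.rel W u := by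
  rcases u.eq_empty_or_nonempty with rfl | hne
  · exact ⟨∅, by simp, Set.finite_empty, f.nontriv⟩
  · have : ∀ d : u, ∃ w : Set D₁, w ⊆ x ∧ f.rel w {d.1} := fun d => hu d.2
    choose w hwx hwrel using this
    have : Finite u := hufin.to_subtype
    set W : Set D₁ := ⋃ d : u, w d with hW
    have hWfin : W.Finite := Set.finite_iUnion fun d => (f.rel_finite _ _ (hwrel d)).1
    have hWx : W ⊆ x := Set.iUnion_subset fun d => hwx d
    refine ⟨W, hWx, hWfin, ?_⟩
    have : f.rel W (⋃₀ (Set.range fun d : u => ({d.1} : Set D₂))) := by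
      refine f.accum W _ (Set.finite_range _)
        ⟨{hne.choose}, ⟨⟨hne.choose, hne.choose_spec⟩, rfl⟩⟩ ?_
      rintro v ⟨d, rfl⟩
      exact f.trans W (w d) {d.1} {d.1}
        (A.refl W (w d) hWfin (Set.subset_iUnion _ d)) (hwrel d)
        (B.refl _ _ (Set.finite_singleton _) subset_rfl)
    have heq : (⋃₀ (Set.range fun d : u => ({d.1} : Set D₂))) = u := by
      ext e; simp [Set.sUnion_range]
    rwa [heq] at this

/-- the function `|f|` associated with an approximable mapping `f`
is correctly defined (maps elements to elements) and Scott continuous: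
monotone and preserving unions of nonempty directed families of elements. -/
theorem stmt4 {D₁ D₂ : Type*} (A : AlgInfoSys D₁) (B : AlgInfoSys D₂)
    (f : ApproxMapping A B) :
    (∀ x : Set D₁, A.IsElement x → B.IsElement (f.app x)) ∧
    (∀ x y : Set D₁, A.IsElement x → A.IsElement y → x ⊆ y → f.app x ⊆ f.app y) ∧
    (∀ S : Set (Set D₁), S.Nonempty → (∀ s ∈ S, A.IsElement s) →
      DirectedOn (· ⊆ ·) S → f.app (⋃₀ S) = ⋃ s ∈ S, f.app s) := by
  refine ⟨?_, ?_, ?_⟩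
  · intro x hx
    constructor
    · rintro ⟨u, hux, hrel⟩
      have hufin := (f.rel_finite _ _ hrel).1
      have : ¬ A.entails u {A.nabla} := fun h => hx.1 (hx.2 u {A.nabla} hux h rfl)
      exact f.consistent u hufin this hrel
    · intro u v hu hent
      have hufin := (B.entails_finite _ _ hent).1
      obtain ⟨W, hWx, hWfin, hWrel⟩ := app_rel_whole f hufin hu
      intro e he
      exact ⟨W, hWx, f.trans W W u {e} (A.refl W W hWfin subset_rfl) hWrel
        (entails_single B hent he)⟩
  · rintro x y _ _ hxy d ⟨u, hux, hrel⟩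
    exact ⟨u, hux.trans hxy, hrel⟩
  · intro S hS hSel hdir
    ext d
    constructor
    · rintro ⟨u, huS, hrel⟩
      obtain ⟨s, hs, hus⟩ := directed_finite_subset hS hdir (f.rel_finite _ _ hrel).1 huS
      exact Set.mem_biUnion hs ⟨u, hus, hrel⟩
    · intro hd
      obtain ⟨s, hs, u, hus, hrel⟩ := by simpa [ApproxMapping.app] using hd
      exact ⟨u, hus.trans (Set.subset_sUnion_of_mem hs), hrel⟩
end

section
/- Let A be an algebraic Scott domain and let p : A → A be a Scott continuous projection (p ∘ p = p and p(x) ⊑ x for all x). Then the set Fix(p) = {x ∈ A | p(x) = x}, with the order induced from A, is an algebraic dcpo (i.e., p is finitary) if and only if for all compact elements x₀, z₀ of A with z₀ ⊑ p(x₀) there exists a compact element y₀ of A with z₀ ⊑ y₀ ⊑ x₀ and p(y₀) = y₀. -/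
/-- `K` is a basis of a continuous dcpo: for every `a`, the set of elements of `K`
way below `a` is (nonempty and) directed with least upper bound `a`. -/
def IsDomBasis {α : Type*} [Preorder α] (K : Set α) : Prop :=
  ∀ a : α, ({k ∈ K | wayBelow k a}).Nonempty ∧
    DirectedOn (· ≤ ·) {k ∈ K | wayBelow k a} ∧
    IsLUB {k ∈ K | wayBelow k a} a

/-- Scott open sets: upper sets inaccessible by least upper bounds of nonempty
directed sets. -/
def ScottOpen {α : Type*} [Preorder α] (U : Set α) : Prop :=
  (∀ x ∈ U, ∀ y, x ≤ y → y ∈ U) ∧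
  ∀ S : Set α, S.Nonempty → DirectedOn (· ≤ ·) S → ∀ b : α, IsLUB S b → b ∈ U → ∃ s ∈ S, s ∈ U

/-- Interior in the Scott topology: the largest Scott open subset. -/
def scottInt {α : Type*} [Preorder α] (B : Set α) : Set α :=
  ⋃₀ {U : Set α | ScottOpen U ∧ U ⊆ B}

/-- Negative information about `x`: the elements inconsistent with `x`
(the pair has no upper bound). -/
def negSet {α : Type*} [Preorder α] (x : α) : Set α :=
  {y | ¬∃ b, x ≤ b ∧ y ≤ b}

/-- `J_x = {y | x ∈ Int (I_y)}`, the continuous approximation of `I_x = negSet x`. -/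
def jSet {α : Type*} [Preorder α] (x : α) : Set α :=
  {y | x ∈ scottInt (negSet y)}

/-- The set of total (maximal) elements. -/
def TotalElems (α : Type*) [Preorder α] : Set α := {x | ∀ y, x ≤ y → y = x}

section Aux

variable {α : Type*} [PartialOrder α]

lemma lub_fixed {p : α → α} (hcont : ScottContinuous p) (hproj : ∀ x : α, p x ≤ x)
    {S : Set α} (hS : ∀ s ∈ S, p s = s) (hdir : DirectedOn (· ≤ ·) S)
    {b : α} (hlub : IsLUB S b) : p b = b := by
  rcases S.eq_empty_or_nonempty with rfl | hne
  · refine le_antisymm (hproj b) (hlub.2 ?_)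
    intro x hx
    exact absurd hx (by simp)
  · have h1 : IsLUB (p '' S) (p b) := hcont hne hdir hlub
    have h2 : p '' S = S := by
      ext x
      constructor
      · rintro ⟨s, hs, rfl⟩
        rw [hS s hs]; exact hs
      · intro hx
        exact ⟨x, hx, hS x hx⟩
    rw [h2] at h1
    exact h1.unique hlub

lemma img_directed {p : α → α} {T : Set {x : α // p x = x}}
    (h : DirectedOn (· ≤ ·) T) : DirectedOn (· ≤ ·) (Subtype.val '' T) := by
  rintro _ ⟨x, hx, rfl⟩ _ ⟨y, hy, rfl⟩
  obtain ⟨z, hz, h1, h2⟩ := h x hx y hy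
  exact ⟨z.1, ⟨z, hz, rfl⟩, h1, h2⟩

lemma sub_lub {p : α → α} {T : Set {x : α // p x = x}} {b : {x : α // p x = x}}
    (hlub : IsLUB (Subtype.val '' T) (b : α)) : IsLUB T b := by
  constructor
  · intro t ht
    exact hlub.1 ⟨t, ht, rfl⟩
  · intro u hu
    show (b : α) ≤ (u : α)
    refine hlub.2 ?_
    rintro _ ⟨t, ht, rfl⟩
    exact hu ht

lemma lub_sub (hd : IsDcpo α) {p : α → α} (hcont : ScottContinuous p)
    (hproj : ∀ x : α, p x ≤ x) {T : Set {x : α // p x = x}}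
    (hdir : DirectedOn (· ≤ ·) T) {b : {x : α // p x = x}}
    (hlub : IsLUB T b) : IsLUB (Subtype.val '' T) (b : α) := by
  obtain ⟨c, hc⟩ := hd (Subtype.val '' T) (img_directed hdir)
  have hpc : p c = c := by
    refine lub_fixed hcont hproj ?_ (img_directed hdir) hc
    rintro _ ⟨t, _, rfl⟩
    exact t.2
  have h2 : IsLUB T (⟨c, hpc⟩ : {x : α // p x = x}) := sub_lub hc
  have h3 : b = ⟨c, hpc⟩ := hlub.unique h2
  rw [h3]
  exact hc

/-- Compact in Fix implies compact in α. -/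
lemma cmpFix_to_cmp {p : α → α} (hcont : ScottContinuous p) (hidem : p ∘ p = p)
    (hproj : ∀ x : α, p x ≤ x) {k : {x : α // p x = x}}
    (hk : wayBelow k k) : wayBelow (k : α) (k : α) := by
  intro S hne hdir b hlub hle
  have hpmono : Monotone p := hcont.monotone
  set T : Set {x : α // p x = x} :=
    (fun s : α => (⟨p s, congrFun hidem s⟩ : {x : α // p x = x})) '' S with hT
  have hTval : Subtype.val '' T = p '' S := by
    ext x
    constructor
    · rintro ⟨_, ⟨s, hs, rfl⟩, rfl⟩
      exact ⟨s, hs, rfl⟩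
    · rintro ⟨s, hs, rfl⟩
      exact ⟨⟨p s, congrFun hidem s⟩, ⟨s, hs, rfl⟩, rfl⟩
  have hTdir : DirectedOn (· ≤ ·) T := by
    rintro _ ⟨x, hx, rfl⟩ _ ⟨y, hy, rfl⟩
    obtain ⟨z, hz, h1, h2⟩ := hdir x hx y hy
    exact ⟨⟨p z, congrFun hidem z⟩, ⟨z, hz, rfl⟩,
      hpmono h1, hpmono h2⟩
  have hpb : p (p b) = p b := congrFun hidem b
  have hlubT : IsLUB T (⟨p b, hpb⟩ : {x : α // p x = x}) := by
    apply sub_lub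
    rw [hTval]
    exact hcont hne hdir hlub
  have hkle : k ≤ (⟨p b, hpb⟩ : {x : α // p x = x}) := by
    show (k : α) ≤ p b
    calc (k : α) = p k := k.2.symm
    _ ≤ p b := hpmono hle
  obtain ⟨t, ht, hkt⟩ := hk T ⟨_, ⟨hne.choose, hne.choose_spec, rfl⟩⟩ hTdir _ hlubT hkle
  obtain ⟨s, hs, hts⟩ := ht
  refine ⟨s, hs, ?_⟩
  have : (k : α) ≤ (t : α) := hkt
  rw [← hts] at this
  exact le_trans this (hproj s)

/-- Compact in α implies compact in Fix (for fixed points). -/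
lemma cmp_to_cmpFix (hd : IsDcpo α) {p : α → α} (hcont : ScottContinuous p)
    (hproj : ∀ x : α, p x ≤ x) {k : {x : α // p x = x}}
    (hk : wayBelow (k : α) (k : α)) : wayBelow k k := by
  intro T hne hdir b hlub hle
  have hlub' : IsLUB (Subtype.val '' T) (b : α) := lub_sub hd hcont hproj hdir hlub
  have hne' : (Subtype.val '' T).Nonempty := hne.image _
  obtain ⟨_, ⟨t, ht, rfl⟩, hkt⟩ := hk _ hne' (img_directed hdir) _ hlub' hle
  exact ⟨t, ht, hkt⟩

end Aux

/-- a Scott continuous projection `p` of an algebraic Scott domain is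
finitary (its set of fixed points, with the induced order, is an algebraic dcpo)
iff for all compact `x₀, z₀` with `z₀ ≤ p x₀` there is a compact fixed point `y₀`
with `z₀ ≤ y₀ ≤ x₀`. -/
theorem stmt5 {α : Type*} [PartialOrder α]
    (hd : IsDcpo α) (hb : BoundedComplete α) (ha : IsAlgebraicDom α)
    (p : α → α) (hcont : ScottContinuous p) (hidem : p ∘ p = p)
    (hproj : ∀ x : α, p x ≤ x) :
    (IsDcpo {x : α // p x = x} ∧ IsAlgebraicDom {x : α // p x = x}) ↔
    (∀ x₀ z₀ : α, wayBelow x₀ x₀ → wayBelow z₀ z₀ → z₀ ≤ p x₀ →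
      ∃ y₀ : α, wayBelow y₀ y₀ ∧ z₀ ≤ y₀ ∧ y₀ ≤ x₀ ∧ p y₀ = y₀) := by
  have hpmono : Monotone p := hcont.monotone
  -- Fix(p) is always a dcpo
  have hFixDcpo : IsDcpo {x : α // p x = x} := by
    intro T hTdir
    obtain ⟨c, hc⟩ := hd (Subtype.val '' T) (img_directed hTdir)
    have hpc : p c = c := by
      refine lub_fixed hcont hproj ?_ (img_directed hTdir) hc
      rintro _ ⟨t, _, rfl⟩
      exact t.2
    exact ⟨⟨c, hpc⟩, sub_lub hc⟩
  constructor
  · rintro ⟨_, haF⟩ x₀ z₀ hx₀ hz₀ hle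
    have hpx : p (p x₀) = p x₀ := congrFun hidem x₀
    set a : {x : α // p x = x} := ⟨p x₀, hpx⟩ with ha_def
    obtain ⟨hne, hdir, hlub⟩ := haF a
    have hlub' : IsLUB (Subtype.val '' {k : {x : α // p x = x} | wayBelow k k ∧ k ≤ a})
        (p x₀) := lub_sub hd hcont hproj hdir hlub
    obtain ⟨_, ⟨k, hk, rfl⟩, hzk⟩ :=
      hz₀ _ (hne.image _) (img_directed hdir) _ hlub' hle
    refine ⟨k, cmpFix_to_cmp hcont hidem hproj hk.1, hzk, ?_, k.2⟩
    have : (k : α) ≤ p x₀ := hk.2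
    exact le_trans this (hproj x₀)
  · intro hcond
    refine ⟨hFixDcpo, ?_⟩
    intro a
    -- α-level set of compact fixed points below a
    set Da : Set α := {k | wayBelow k k ∧ k ≤ (a : α) ∧ p k = k} with hDa_def
    -- approximation: every compact below a is below some element of Da
    have happrox : ∀ z : α, wayBelow z z → z ≤ (a : α) → ∃ y ∈ Da, z ≤ y := by
      intro z hz hza
      obtain ⟨hKne, hKdir, hKlub⟩ := ha (a : α)
      have hplub : IsLUB (p '' {k : α | wayBelow k k ∧ k ≤ (a : α)}) (p (a : α)) :=
        hcont hKne hKdir hKlub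
      rw [a.2] at hplub
      have hpKdir : DirectedOn (· ≤ ·) (p '' {k : α | wayBelow k k ∧ k ≤ (a : α)}) := by
        rintro _ ⟨x, hx, rfl⟩ _ ⟨y, hy, rfl⟩
        obtain ⟨w, hw, h1, h2⟩ := hKdir x hx y hy
        exact ⟨p w, ⟨w, hw, rfl⟩, hpmono h1, hpmono h2⟩
      obtain ⟨_, ⟨j, hj, rfl⟩, hzpj⟩ := hz _ (hKne.image _) hpKdir _ hplub hza
      obtain ⟨y, hy, hzy, hyj, hpy⟩ := hcond j z hj.1 hz hzpj
      exact ⟨y, ⟨hy, le_trans hyj hj.2, hpy⟩, hzy⟩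
    -- Da is nonempty: contains bottom
    have hDane : Da.Nonempty := by
      obtain ⟨bot, hbot⟩ := hd ∅ (by intro x hx; exact absurd hx (by simp))
      have hbotle : ∀ x : α, bot ≤ x := by
        intro x
        exact hbot.2 (by intro y hy; exact absurd hy (by simp))
      refine ⟨bot, ?_, hbotle _, le_antisymm (hproj bot) (hbotle _)⟩
      intro S hSne _ b _ _
      obtain ⟨s, hs⟩ := hSne
      exact ⟨s, hs, hbotle s⟩
    -- Da is directed
    have hDadir : DirectedOn (· ≤ ·) Da := by
      rintro k₁ ⟨hk₁c, hk₁a, hk₁p⟩ k₂ ⟨hk₂c, hk₂a, hk₂p⟩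
      obtain ⟨m, hm⟩ := hb {k₁, k₂} ⟨a, by rintro s (rfl | rfl) <;> assumption⟩
      have hmk₁ : k₁ ≤ m := hm.1 (by left; rfl)
      have hmk₂ : k₂ ≤ m := hm.1 (by right; rfl)
      have hma : m ≤ (a : α) := hm.2 (by rintro s (rfl | rfl) <;> assumption)
      have hmc : wayBelow m m := by
        intro S hSne hSdir c hclub hmc
        obtain ⟨s₁, hs₁, hk₁s₁⟩ := hk₁c S hSne hSdir c hclub (le_trans hmk₁ hmc)
        obtain ⟨s₂, hs₂, hk₂s₂⟩ := hk₂c S hSne hSdir c hclub (le_trans hmk₂ hmc)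
        obtain ⟨s, hs, hs₁s, hs₂s⟩ := hSdir s₁ hs₁ s₂ hs₂
        refine ⟨s, hs, hm.2 ?_⟩
        rintro t (rfl | rfl)
        · exact le_trans hk₁s₁ hs₁s
        · exact le_trans hk₂s₂ hs₂s
      obtain ⟨y, hy, hmy⟩ := happrox m hmc hma
      exact ⟨y, hy, le_trans hmk₁ hmy, le_trans hmk₂ hmy⟩
    -- IsLUB Da a
    have hDalub : IsLUB Da (a : α) := by
      constructor
      · rintro k ⟨_, hka, _⟩
        exact hka
      · intro u hu
        obtain ⟨_, _, hKlub⟩ := ha (a : α)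
        refine hKlub.2 ?_
        rintro k ⟨hkc, hka⟩
        obtain ⟨y, hy, hky⟩ := happrox k hkc hka
        exact le_trans hky (hu hy)
    -- transfer to the subtype
    have hset : Subtype.val '' {k : {x : α // p x = x} | wayBelow k k ∧ k ≤ a} = Da := by
      ext x
      constructor
      · rintro ⟨k, ⟨hkc, hka⟩, rfl⟩
        exact ⟨cmpFix_to_cmp hcont hidem hproj hkc, hka, k.2⟩
      · rintro ⟨hxc, hxa, hxp⟩
        exact ⟨⟨x, hxp⟩, ⟨cmp_to_cmpFix hd hcont hproj hxc, hxa⟩, rfl⟩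
    refine ⟨?_, ?_, ?_⟩
    · obtain ⟨y, hyc, hya, hyp⟩ := hDane
      exact ⟨⟨y, hyp⟩, cmp_to_cmpFix hd hcont hproj hyc, hya⟩
    · intro k₁ hk₁ k₂ hk₂
      have h₁ : (k₁ : α) ∈ Da := hset ▸ ⟨k₁, hk₁, rfl⟩
      have h₂ : (k₂ : α) ∈ Da := hset ▸ ⟨k₂, hk₂, rfl⟩
      obtain ⟨y, hy, hy₁, hy₂⟩ := hDadir _ h₁ _ h₂
      rw [← hset] at hy
      obtain ⟨z, hz, rfl⟩ := hy
      exact ⟨z, hz, hy₁, hy₂⟩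
    · apply sub_lub
      rw [hset]
      exact hDalub
end

section
/- Let A be an algebraic Scott domain and let r : A → A be a Scott continuous retraction (r ∘ r = r). Then the set Fix(r) = {x ∈ A | r(x) = x}, with the order induced from A, is an algebraic dcpo (i.e., r is finitary) if and only if for all compact elements x₀, z₀ of A with z₀ ⊑ r(x₀) there exists a compact element y₀ of A such that y₀ ⊑ r(x₀), y₀ ⊑ r(y₀), and z₀ ⊑ r(y₀). -/
section stmt6aux

variable {α : Type*} [PartialOrder α]

lemma sx_dirOn_image_val {r : α → α} {S : Set {x : α // r x = x}}
    (h : DirectedOn (· ≤ ·) S) : DirectedOn (· ≤ ·) (Subtype.val '' S) := by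
  rintro _ ⟨x, hx, rfl⟩ _ ⟨y, hy, rfl⟩
  obtain ⟨z, hz, h1, h2⟩ := h x hx y hy
  exact ⟨z.val, ⟨z, hz, rfl⟩, h1, h2⟩

lemma sx_dirOn_image_mono {f : α → α} (hm : Monotone f) {C : Set α}
    (h : DirectedOn (· ≤ ·) C) : DirectedOn (· ≤ ·) (f '' C) := by
  rintro _ ⟨x, hx, rfl⟩ _ ⟨y, hy, rfl⟩
  obtain ⟨z, hz, h1, h2⟩ := h x hx y hy
  exact ⟨f z, ⟨z, hz, rfl⟩, hm h1, hm h2⟩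

lemma sx_wayBelow_join {c d j : α} (hc : wayBelow c c) (hdw : wayBelow d d)
    (hj : IsLUB {c, d} j) : wayBelow j j := by
  intro S hne hdir b hlub hle
  obtain ⟨s1, hs1, hcs⟩ := hc S hne hdir b hlub ((hj.1 (by simp)).trans hle)
  obtain ⟨s2, hs2, hds⟩ := hdw S hne hdir b hlub ((hj.1 (by simp)).trans hle)
  obtain ⟨s, hs, h1, h2⟩ := hdir s1 hs1 s2 hs2
  refine ⟨s, hs, hj.2 ?_⟩
  rintro x (rfl | rfl)
  exacts [hcs.trans h1, hds.trans h2]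

end stmt6aux

/-- a Scott continuous retraction `r` of an algebraic Scott domain is
finitary (its set of fixed points, with the induced order, is an algebraic dcpo)
iff for all compact `x₀, z₀` with `z₀ ≤ r x₀` there is a compact `y₀` with
`y₀ ≤ r x₀`, `y₀ ≤ r y₀` and `z₀ ≤ r y₀`. -/
theorem stmt6 {α : Type*} [PartialOrder α]
    (hd : IsDcpo α) (hb : BoundedComplete α) (ha : IsAlgebraicDom α)
    (r : α → α) (hcont : ScottContinuous r) (hidem : r ∘ r = r) :
    (IsDcpo {x : α // r x = x} ∧ IsAlgebraicDom {x : α // r x = x}) ↔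
    (∀ x₀ z₀ : α, wayBelow x₀ x₀ → wayBelow z₀ z₀ → z₀ ≤ r x₀ →
      ∃ y₀ : α, wayBelow y₀ y₀ ∧ y₀ ≤ r x₀ ∧ y₀ ≤ r y₀ ∧ z₀ ≤ r y₀) := by
  have hmono : Monotone r := hcont.monotone
  have hrr : ∀ x, r (r x) = r x := fun x => congrFun hidem x
  -- least element of α
  obtain ⟨bot, hbotlub⟩ := hd ∅ (fun x hx => hx.elim)
  have hbot : ∀ x, bot ≤ x := fun x => hbotlub.2 (fun y hy => hy.elim)
  have hbotc : wayBelow bot bot := by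
    intro S hne hdir b hlub hle
    obtain ⟨s, hs⟩ := hne
    exact ⟨s, hs, hbot s⟩
  have hrbot_le : ∀ x : {x : α // r x = x}, r bot ≤ x.val :=
    fun x => le_of_le_of_eq (hmono (hbot x.val)) x.2
  -- lubs of nonempty directed sets of fixed points
  have hfixlub : ∀ S : Set {x : α // r x = x}, S.Nonempty → DirectedOn (· ≤ ·) S →
      ∃ c : α, ∃ hc : r c = c, IsLUB (Subtype.val '' S) c ∧ IsLUB S ⟨c, hc⟩ := by
    intro S hne hdir
    obtain ⟨c, hc⟩ := hd _ (sx_dirOn_image_val hdir)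
    have himg : r '' (Subtype.val '' S) = Subtype.val '' S := by
      ext x
      constructor
      · rintro ⟨_, ⟨y, hy, rfl⟩, rfl⟩
        exact ⟨y, hy, y.2.symm⟩
      · rintro ⟨y, hy, rfl⟩
        exact ⟨y.val, ⟨y, hy, rfl⟩, y.2⟩
    have hrc := hcont (hne.image _) (sx_dirOn_image_val hdir) hc
    rw [himg] at hrc
    have hfc : r c = c := hrc.unique hc
    refine ⟨c, hfc, hc, ?_, ?_⟩
    · intro s hs
      exact hc.1 ⟨s, hs, rfl⟩
    · intro u hu
      refine hc.2 ?_
      rintro _ ⟨y, hy, rfl⟩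
      exact hu hy
  have hlubval : ∀ {S : Set {x : α // r x = x}}, S.Nonempty → DirectedOn (· ≤ ·) S →
      ∀ {b : {x : α // r x = x}}, IsLUB S b → IsLUB (Subtype.val '' S) b.val := by
    intro S hne hdir b hlub
    obtain ⟨c, hc, hcval, hclub⟩ := hfixlub S hne hdir
    have : b = ⟨c, hc⟩ := hlub.unique hclub
    rw [this]
    exact hcval
  -- r y₀ is a compact fixed point whenever y₀ is compact with y₀ ≤ r y₀
  have hfixcpt : ∀ y₀ : α, wayBelow y₀ y₀ → y₀ ≤ r y₀ →
      wayBelow (⟨r y₀, hrr y₀⟩ : {x : α // r x = x}) ⟨r y₀, hrr y₀⟩ := by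
    intro y₀ hy₀ hyr S hne hdir b hlub hle
    have hv := hlubval hne hdir hlub
    have hyb : y₀ ≤ b.val := hyr.trans hle
    obtain ⟨_, ⟨t, ht, rfl⟩, hys⟩ := hy₀ _ (hne.image _) (sx_dirOn_image_val hdir) b.val hv hyb
    exact ⟨t, ht, show r y₀ ≤ t.val from le_of_le_of_eq (hmono hys) t.2⟩
  -- approximation: z₀ compact below r x gives compact x₀ ≤ x with z₀ ≤ r x₀
  have happrox : ∀ z₀ x : α, wayBelow z₀ z₀ → z₀ ≤ r x →
      ∃ x₀, wayBelow x₀ x₀ ∧ x₀ ≤ x ∧ z₀ ≤ r x₀ := by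
    intro z₀ x hz₀ hle
    obtain ⟨hCne, hCdir, hClub⟩ := ha x
    have hrlub := hcont hCne hCdir hClub
    obtain ⟨_, ⟨x₀, hx₀, rfl⟩, hz⟩ :=
      hz₀ _ (hCne.image _) (sx_dirOn_image_mono hmono hCdir) (r x) hrlub hle
    exact ⟨x₀, hx₀.1, hx₀.2, hz⟩
  constructor
  · -- forward direction
    rintro ⟨hdF, haF⟩ x₀ z₀ hx₀ hz₀ hle
    set a : {x : α // r x = x} := ⟨r x₀, hrr x₀⟩ with ha_def
    obtain ⟨hDne, hDdir, hDlub⟩ := haF a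
    have hDval := hlubval hDne hDdir hDlub
    obtain ⟨_, ⟨k, hkD, rfl⟩, hzk⟩ :=
      hz₀ _ (hDne.image _) (sx_dirOn_image_val hDdir) a.val hDval hle
    -- k is a compact fixed point with z₀ ≤ k.val ≤ r x₀
    have hka : k.val ≤ r x₀ := hkD.2
    -- the family of r-images of compacts below k
    set F : Set {x : α // r x = x} :=
      {m | ∃ y, wayBelow y y ∧ y ≤ k.val ∧ m.val = r y} with hF_def
    have hFne : F.Nonempty :=
      ⟨⟨r bot, hrr bot⟩, bot, hbotc, hbot k.val, rfl⟩
    have hFdir : DirectedOn (· ≤ ·) F := by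
      rintro m1 ⟨y1, hy1, hy1k, hv1⟩ m2 ⟨y2, hy2, hy2k, hv2⟩
      obtain ⟨j, hj⟩ := hb {y1, y2} ⟨k.val, by rintro s (rfl | rfl) <;> assumption⟩
      have hjc := sx_wayBelow_join hy1 hy2 hj
      have hjk : j ≤ k.val := hj.2 (by rintro s (rfl | rfl) <;> assumption)
      refine ⟨⟨r j, hrr j⟩, ⟨j, hjc, hjk, rfl⟩, ?_, ?_⟩
      · show m1.val ≤ r j
        rw [hv1]; exact hmono (hj.1 (by simp))
      · show m2.val ≤ r j
        rw [hv2]; exact hmono (hj.1 (by simp))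
    have hFlub : IsLUB F k := by
      constructor
      · rintro m ⟨y, _, hyk, hv⟩
        show m.val ≤ k.val
        rw [hv]
        exact le_of_le_of_eq (hmono hyk) k.2
      · intro u hu
        show k.val ≤ u.val
        obtain ⟨hCne, hCdir, hClub⟩ := ha k.val
        have hrlub := hcont hCne hCdir hClub
        have hu' : u.val ∈ upperBounds (r '' {c : α | wayBelow c c ∧ c ≤ k.val}) := by
          rintro _ ⟨c, hc, rfl⟩
          exact hu (⟨c, hc.1, hc.2, rfl⟩ : (⟨r c, hrr c⟩ : {x : α // r x = x}) ∈ F)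
        calc k.val = r k.val := k.2.symm
        _ ≤ u.val := hrlub.2 hu'
    obtain ⟨m, ⟨y, hyc, hyk, hmv⟩, hkm⟩ := hkD.1 F hFne hFdir k hFlub le_rfl
    have hkval : k.val = r y := le_antisymm (le_of_le_of_eq hkm hmv)
      (le_of_le_of_eq (hmono hyk) k.2)
    refine ⟨y, hyc, hyk.trans hka, ?_, ?_⟩
    · rw [← hkval]; exact hyk
    · rw [← hkval]; exact hzk
  · -- backward direction
    intro hstar
    have hdcpo : IsDcpo {x : α // r x = x} := by
      intro S hdir
      rcases S.eq_empty_or_nonempty with rfl | hne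
      · exact ⟨⟨r bot, hrr bot⟩, fun s hs => hs.elim, fun u _ => hrbot_le u⟩
      · obtain ⟨c, hc, _, hlub⟩ := hfixlub S hne hdir
        exact ⟨_, hlub⟩
    refine ⟨hdcpo, ?_⟩
    intro a
    set G : Set {x : α // r x = x} :=
      {m | ∃ y, wayBelow y y ∧ y ≤ r y ∧ m.val = r y ∧ r y ≤ a.val} with hG_def
    have hGsub : ∀ m ∈ G, wayBelow m m ∧ m ≤ a := by
      rintro m ⟨y, hy, hyr, hmv, hya⟩
      constructor
      · have hm : m = ⟨r y, hrr y⟩ := Subtype.ext hmv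
        rw [hm]
        exact hfixcpt y hy hyr
      · show m.val ≤ a.val
        rw [hmv]; exact hya
    have hGne : G.Nonempty :=
      ⟨⟨r bot, hrr bot⟩, bot, hbotc, hbot (r bot), rfl, hrbot_le a⟩
    have hkey : ∀ z₀, wayBelow z₀ z₀ → z₀ ≤ a.val → ∃ m ∈ G, z₀ ≤ m.val := by
      intro z₀ hz₀ hza
      have hza' : z₀ ≤ r a.val := by rw [a.2]; exact hza
      obtain ⟨x₀, hx₀c, hx₀a, hzrx₀⟩ := happrox z₀ a.val hz₀ hza'
      obtain ⟨y, hyc, hyx, hyr, hzy⟩ := hstar x₀ z₀ hx₀c hz₀ hzrx₀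
      refine ⟨⟨r y, hrr y⟩, ⟨y, hyc, hyr, rfl, ?_⟩, hzy⟩
      calc r y ≤ r (r x₀) := hmono hyx
      _ = r x₀ := hrr x₀
      _ ≤ r a.val := hmono hx₀a
      _ = a.val := a.2
    have hGdir : DirectedOn (· ≤ ·) G := by
      rintro m1 ⟨y1, hy1, hy1r, hv1, ha1⟩ m2 ⟨y2, hy2, hy2r, hv2, ha2⟩
      have hy1a : y1 ≤ a.val := hy1r.trans ha1
      have hy2a : y2 ≤ a.val := hy2r.trans ha2
      obtain ⟨j, hj⟩ := hb {y1, y2} ⟨a.val, by rintro s (rfl | rfl) <;> assumption⟩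
      have hjc := sx_wayBelow_join hy1 hy2 hj
      have hja : j ≤ a.val := hj.2 (by rintro s (rfl | rfl) <;> assumption)
      obtain ⟨m, hmG, hjm⟩ := hkey j hjc hja
      have hmfix : r m.val = m.val := m.2
      refine ⟨m, hmG, ?_, ?_⟩
      · show m1.val ≤ m.val
        rw [hv1]
        calc r y1 ≤ r j := hmono (hj.1 (by simp))
        _ ≤ r m.val := hmono hjm
        _ = m.val := hmfix
      · show m2.val ≤ m.val
        rw [hv2]
        calc r y2 ≤ r j := hmono (hj.1 (by simp))
        _ ≤ r m.val := hmono hjm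
        _ = m.val := hmfix
    have hGlub : IsLUB G a := by
      constructor
      · rintro m ⟨y, _, _, hv, hya⟩
        show m.val ≤ a.val
        rw [hv]; exact hya
      · intro u hu
        show a.val ≤ u.val
        obtain ⟨hCne, hCdir, hClub⟩ := ha a.val
        refine hClub.2 ?_
        rintro z₀ ⟨hz₀c, hz₀a⟩
        obtain ⟨m, hmG, hzm⟩ := hkey z₀ hz₀c hz₀a
        exact hzm.trans (hu hmG)
    -- the set of fixed-point compacts below a
    refine ⟨⟨⟨r bot, hrr bot⟩, ?_, hrbot_le a⟩, ?_, ?_⟩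
    · intro S hne hdir b hlub hle
      obtain ⟨s, hs⟩ := hne
      exact ⟨s, hs, hrbot_le s⟩
    · rintro c ⟨hcc, hca⟩ d ⟨hdc, hda⟩
      obtain ⟨m1, hm1, hc1⟩ := hcc G hGne hGdir a hGlub hca
      obtain ⟨m2, hm2, hd2⟩ := hdc G hGne hGdir a hGlub hda
      obtain ⟨m, hmG, h1, h2⟩ := hGdir m1 hm1 m2 hm2
      exact ⟨m, ⟨(hGsub m hmG).1, (hGsub m hmG).2⟩, hc1.trans h1, hd2.trans h2⟩
    · constructor
      · rintro k ⟨_, hka⟩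
        exact hka
      · intro u hu
        refine hGlub.2 ?_
        intro m hm
        exact hu ⟨(hGsub m hm).1, (hGsub m hm).2⟩
end

section
/- Let A be an algebraic dcpo whose basis K consists of the compact elements of A, with K countable. Let w : K → ℝ assign strictly positive weights with ∑_{k∈K} w(k) = 1, and define μ(U) = ∑_{k ∈ U ∩ K} w(k) for each Scott open set U ⊆ A. Then μ is a CC-valuation on the Scott topology of A: it is a normalized valuation (μ(∅)=0, μ(A)=1, monotone, and μ(U)+μ(V)=μ(U∩V)+μ(U∪V)), continuous (for every directed system of open sets {U_i}, μ(⋃_i U_i) = sup_i μ(U_i)), strongly non-degenerate (U ⊊ V open implies μ(U) < μ(V)), and co-continuous (for every filtered system of open sets {U_i}, μ(Int(⋂_i U_i)) = inf_i μ(U_i)). -/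
section auxStmt8

private lemma stmt8_dirFinset {β γ : Type*} (r : Set β → Set β → Prop)
    (htrans : ∀ {a b c : Set β}, r a b → r b c → r a c)
    (𝒰 : Set (Set β)) (hdir : DirectedOn r 𝒰) (hne : 𝒰.Nonempty)
    (G : Finset γ) (g : γ → Set β) (hg : ∀ k ∈ G, g k ∈ 𝒰) :
    ∃ U ∈ 𝒰, ∀ k ∈ G, r (g k) U := by
  classical
  induction G using Finset.induction_on with
  | empty => exact ⟨hne.choose, hne.choose_spec, by simp⟩
  | @insert a s ha ih =>
    obtain ⟨U, hU, hUall⟩ := ih (fun k hk => hg k (Finset.mem_insert_of_mem hk))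
    obtain ⟨V, hV, hUV, haV⟩ := hdir U hU (g a) (hg a (Finset.mem_insert_self a s))
    refine ⟨V, hV, ?_⟩
    intro k hk
    rcases Finset.mem_insert.1 hk with rfl | hk
    · exact haV
    · exact htrans (hUall k hk) hUV

private lemma stmt8_tsum_inter {α : Type*} (K U : Set α) (w : α → ℝ) :
    ∑' x : ↥(U ∩ K), w (x : α) =
      ∑' k : ↥K, Set.indicator {k : ↥K | (k : α) ∈ U} (fun k : ↥K => w (k : α)) k := by
  rw [← tsum_subtype {k : ↥K | (k : α) ∈ U} (fun k : ↥K => w (k : α))]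
  exact Equiv.tsum_eq
    ⟨fun x : ↥(U ∩ K) => (⟨⟨x.1, x.2.2⟩, x.2.1⟩ : ↥{k : ↥K | (k : α) ∈ U}),
     fun y => ⟨y.1.1, y.2, y.1.2⟩, fun x => rfl, fun y => rfl⟩
    (fun y : ↥{k : ↥K | (k : α) ∈ U} => w ((y : ↥K) : α))

end auxStmt8

/-- on an algebraic dcpo whose (countable) basis `K` consists of the
compact elements, the valuation `μ U = ∑_{k ∈ U ∩ K} w k` obtained from strictly
positive weights summing to `1` is a CC-valuation: a normalized valuation which is
continuous, strongly non-degenerate, and co-continuous. -/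


theorem stmt8 {α : Type*} [PartialOrder α]
    (hd : IsDcpo α) (K : Set α) (hKc : K.Countable) (hB : IsDomBasis K)
    (hKcomp : K = {a : α | wayBelow a a})
    (w : α → ℝ) (hwpos : ∀ k ∈ K, 0 < w k)
    (hsum : Summable fun k : K => w (k : α))
    (hsum1 : ∑' k : K, w (k : α) = 1)
    (μ : Set α → ℝ) (hμ : ∀ U : Set α, μ U = ∑' k : ↥(U ∩ K), w (k : α)) :
    μ ∅ = 0 ∧ μ Set.univ = 1 ∧
    (∀ U V : Set α, ScottOpen U → ScottOpen V → U ⊆ V → μ U ≤ μ V) ∧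
    (∀ U V : Set α, ScottOpen U → ScottOpen V → μ U + μ V = μ (U ∩ V) + μ (U ∪ V)) ∧
    (∀ 𝒰 : Set (Set α), 𝒰.Nonempty → (∀ U ∈ 𝒰, ScottOpen U) → DirectedOn (· ⊆ ·) 𝒰 →
      μ (⋃₀ 𝒰) = sSup (μ '' 𝒰)) ∧
    (∀ U V : Set α, ScottOpen U → ScottOpen V → U ⊂ V → μ U < μ V) ∧
    (∀ 𝒰 : Set (Set α), 𝒰.Nonempty → (∀ U ∈ 𝒰, ScottOpen U) → DirectedOn (· ⊇ ·) 𝒰 →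
      μ (scottInt (⋂₀ 𝒰)) = sInf (μ '' 𝒰)) := by
  classical
  -- the weight function on the basis
  set f : ↥K → ℝ := fun k => w (k : α) with hfdef
  have hf : Summable f := hsum
  have hfnn : ∀ k : ↥K, 0 ≤ f k := fun k => (hwpos k k.2).le
  -- trace of a subset of `α` on the basis
  set T : Set α → Set ↥K := fun U => {k : ↥K | (k : α) ∈ U} with hTdef
  have hms : ∀ S : Set ↥K, Summable (S.indicator f) := fun S => hf.indicator S
  set m : Set ↥K → ℝ := fun S => ∑' k : ↥K, S.indicator f k with hmdef
  -- μ expressed through indicators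
  have key : ∀ U : Set α, μ U = m (T U) := by
    intro U
    rw [hμ U, hmdef, hTdef, hfdef]
    exact stmt8_tsum_inter K U w
  have hmono : ∀ S S' : Set ↥K, S ⊆ S' → m S ≤ m S' := fun S S' h =>
    Summable.tsum_le_tsum (fun k => Set.indicator_le_indicator_of_subset h hfnn k) (hms S) (hms S')
  have hmnn : ∀ S : Set ↥K, 0 ≤ m S := fun S =>
    tsum_nonneg fun k => Set.indicator_nonneg (fun a _ => hfnn a) k
  have hμub : ∀ U : Set α, μ U ≤ m Set.univ := by
    intro U; rw [key]; exact hmono _ _ (Set.subset_univ _)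
  -- tail estimate
  have tail : ∀ ε : ℝ, 0 < ε → ∃ F : Finset ↥K,
      ∑' k : {x : ↥K // x ∉ F}, f ↑k < ε := by
    intro ε hε
    have hs := hf.hasSum
    have hev : ∀ᶠ F : Finset ↥K in Filter.atTop,
        dist (∑ k ∈ F, f k) (∑' k, f k) < ε :=
      hs (Metric.ball_mem_nhds _ hε)
    obtain ⟨F, hF⟩ := hev.exists
    refine ⟨F, ?_⟩
    have hsplit := Summable.sum_add_tsum_subtype_compl hf F
    have : ∑' k : {x : ↥K // x ∉ F}, f ↑k = (∑' k, f k) - ∑ k ∈ F, f k := by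
      linarith [hsplit]
    rw [this]
    have := abs_lt.1 (by rwa [Real.dist_eq] at hF)
    linarith [this.2]
  -- upper estimate of m S by a finite sum plus a tail
  have upper : ∀ (S : Set ↥K) (F : Finset ↥K),
      m S ≤ (∑ k ∈ F, S.indicator f k) + ∑' k : {x : ↥K // x ∉ F}, f ↑k := by
    intro S F
    have hsplit := Summable.sum_add_tsum_subtype_compl (hms S) F
    have hle : ∑' k : {x : ↥K // x ∉ F}, S.indicator f ↑k
        ≤ ∑' k : {x : ↥K // x ∉ F}, f ↑k := by
      refine Summable.tsum_le_tsum (fun k => ?_) ((hms S).subtype _) (hf.subtype _)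
      exact Set.indicator_le_self' (fun x _ => hfnn x) _
    calc m S = (∑ k ∈ F, S.indicator f k) + ∑' k : {x : ↥K // x ∉ F}, S.indicator f ↑k :=
          hsplit.symm
      _ ≤ _ := by linarith
  have lower : ∀ (S : Set ↥K) (F : Finset ↥K), (∑ k ∈ F, S.indicator f k) ≤ m S :=
    fun S F => Summable.sum_le_tsum F (fun k _ => Set.indicator_nonneg (fun a _ => hfnn a) k) (hms S)
  -- monotonicity of μ (no openness needed)
  have hμmono : ∀ U V : Set α, U ⊆ V → μ U ≤ μ V := by
    intro U V h
    rw [key, key]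
    exact hmono _ _ (fun k hk => h hk)
  refine ⟨?_, ?_, ?_, ?_, ?_, ?_, ?_⟩
  · -- μ ∅ = 0
    rw [key]
    have : T ∅ = ∅ := by ext k; simp [hTdef]
    rw [this, hmdef]
    simp
  · -- μ univ = 1
    rw [key]
    have : T Set.univ = Set.univ := by ext k; simp [hTdef]
    rw [this, hmdef]
    simpa [Set.indicator_univ] using hsum1
  · -- monotone
    exact fun U V _ _ h => hμmono U V h
  · -- modular
    intro U V _ _
    rw [key U, key V, key (U ∩ V), key (U ∪ V)]
    have heq1 : T (U ∩ V) = T U ∩ T V := by ext k; simp [hTdef]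
    have heq2 : T (U ∪ V) = T U ∪ T V := by ext k; simp [hTdef]
    rw [heq1, heq2, hmdef]
    simp only
    rw [← Summable.tsum_add (hms (T U)) (hms (T V)), ← Summable.tsum_add (hms (T U ∩ T V)) (hms (T U ∪ T V))]
    congr 1
    funext k
    by_cases h1 : k ∈ T U <;> by_cases h2 : k ∈ T V <;>
      simp [Set.indicator_apply, h1, h2]
  · -- continuity (directed sups)
    intro 𝒰 hne hopen hdir
    have himg : (μ '' 𝒰).Nonempty := hne.image μ
    have hub : ∀ U ∈ 𝒰, μ U ≤ μ (⋃₀ 𝒰) := fun U hU =>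
      hμmono U _ (Set.subset_sUnion_of_mem hU)
    have hbdd : BddAbove (μ '' 𝒰) := ⟨μ (⋃₀ 𝒰), by rintro x ⟨U, hU, rfl⟩; exact hub U hU⟩
    apply le_antisymm
    · apply le_of_forall_pos_le_add
      intro ε hε
      obtain ⟨F, hF⟩ := tail ε hε
      have hchoice : ∀ k : ↥K, (k : α) ∈ ⋃₀ 𝒰 → ∃ U, U ∈ 𝒰 ∧ (k : α) ∈ U := by
        intro k hk
        obtain ⟨U, hU, hkU⟩ := hk
        exact ⟨U, hU, hkU⟩
      choose! g hg1 hg2 using hchoice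
      set F' : Finset ↥K := F.filter (fun k => (k : α) ∈ ⋃₀ 𝒰) with hF'def
      obtain ⟨U₀, hU₀, hU₀all⟩ := stmt8_dirFinset (· ⊆ ·)
        (fun h1 h2 => h1.trans h2) 𝒰 hdir hne F' g
        (fun k hk => hg1 k (Finset.mem_filter.1 hk).2)
      have hsum_eq : (∑ k ∈ F, (T (⋃₀ 𝒰)).indicator f k) = ∑ k ∈ F', f k := by
        rw [hF'def, Finset.sum_filter]
        refine Finset.sum_congr rfl fun k _ => ?_
        by_cases hk : (k : α) ∈ ⋃₀ 𝒰
        · rw [if_pos hk, Set.indicator_of_mem (show k ∈ T (⋃₀ 𝒰) from hk)]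
        · rw [if_neg hk, Set.indicator_of_notMem (show k ∉ T (⋃₀ 𝒰) from hk)]
      have hsum_le : (∑ k ∈ F', f k) ≤ μ U₀ := by
        rw [key]
        have : (∑ k ∈ F', f k) = ∑ k ∈ F', (T U₀).indicator f k := by
          refine Finset.sum_congr rfl fun k hk => ?_
          have hkU : (k : α) ∈ ⋃₀ 𝒰 := (Finset.mem_filter.1 hk).2
          have hmemT : k ∈ T U₀ := hU₀all k hk (hg2 k hkU)
          rw [Set.indicator_of_mem hmemT]
        rw [this]
        exact lower _ _
      have h1 : μ (⋃₀ 𝒰) ≤ (∑ k ∈ F, (T (⋃₀ 𝒰)).indicator f k)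
          + ∑' k : {x : ↥K // x ∉ F}, f ↑k := by
        rw [key]; exact upper _ _
      have h2 : μ U₀ ≤ sSup (μ '' 𝒰) := le_csSup hbdd ⟨U₀, hU₀, rfl⟩
      calc μ (⋃₀ 𝒰) ≤ (∑ k ∈ F, (T (⋃₀ 𝒰)).indicator f k)
            + ∑' k : {x : ↥K // x ∉ F}, f ↑k := h1
        _ ≤ (∑ k ∈ F', f k) + ε := by rw [hsum_eq]; linarith
        _ ≤ sSup (μ '' 𝒰) + ε := by linarith
    · exact csSup_le himg (by rintro x ⟨U, hU, rfl⟩; exact hub U hU)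
  · -- strict monotonicity
    intro U V hU hV hUV
    obtain ⟨a, haV, haU⟩ := Set.exists_of_ssubset hUV
    obtain ⟨hne', hdir', hlub'⟩ := hB a
    obtain ⟨s, hsmem, hsV⟩ := hV.2 _ hne' hdir' a hlub' haV
    have hsa : s ≤ a := hlub'.1 hsmem
    have hsK : s ∈ K := hsmem.1
    have hsU : s ∉ U := fun h => haU (hU.1 s h a hsa)
    set k0 : ↥K := ⟨s, hsK⟩ with hk0def
    have hk0V : k0 ∈ T V := hsV
    have hk0U : k0 ∉ T U := hsU
    have hsingle : (∑' k : ↥K, ({k0} : Set ↥K).indicator f k) = f k0 := by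
      have h := tsum_eq_single (L := SummationFilter.unconditional ↥K) (f := ({k0} : Set ↥K).indicator f) k0
        (fun b hb => Set.indicator_of_notMem (by simpa using hb) f)
      simpa using h
    have hpt : ∀ k : ↥K, (T U).indicator f k + ({k0} : Set ↥K).indicator f k
        ≤ (T V).indicator f k := by
      intro k
      by_cases hk : k = k0
      · rw [hk, Set.indicator_of_notMem hk0U, Set.indicator_of_mem hk0V,
          Set.indicator_of_mem (Set.mem_singleton k0)]
        simp
      · have h1 : ({k0} : Set ↥K).indicator f k = 0 :=
          Set.indicator_of_notMem (s := ({k0} : Set ↥K)) (by simpa using hk) f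
        rw [h1, add_zero]
        exact Set.indicator_le_indicator_of_subset (f := f)
          (fun x hx => hUV.1 hx) hfnn k
    have hle : μ U + f k0 ≤ μ V := by
      rw [key, key]
      calc m (T U) + f k0
          = ∑' k : ↥K, ((T U).indicator f k + ({k0} : Set ↥K).indicator f k) := by
            rw [Summable.tsum_add (hms (T U)) (hf.indicator {k0}), hsingle]
        _ ≤ m (T V) := Summable.tsum_le_tsum hpt ((hms (T U)).add (hf.indicator {k0})) (hms (T V))
    have hpos : 0 < f k0 := hwpos s hsK
    linarith
  · -- co-continuity (filtered infs)
    intro 𝒰 hne hopen hdir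
    have hTeq : T (scottInt (⋂₀ 𝒰)) = T (⋂₀ 𝒰) := by
      ext k
      simp only [hTdef, Set.mem_setOf_eq]
      constructor
      · rintro ⟨W, ⟨hWopen, hWsub⟩, hkW⟩
        exact hWsub hkW
      · intro hk
        have hkc : wayBelow (k : α) (k : α) := (Set.ext_iff.1 hKcomp (k : α)).1 k.2
        refine ⟨{y | (k : α) ≤ y}, ⟨⟨fun x hx y hxy => le_trans hx hxy,
            fun S hS hdS b hb hkb => hkc S hS hdS b hb hkb⟩, ?_⟩, le_refl _⟩
        intro y hy
        intro W hW
        exact (hopen W hW).1 _ (hk W hW) y hy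
    have hμint : μ (scottInt (⋂₀ 𝒰)) = m (T (⋂₀ 𝒰)) := by rw [key, hTeq]
    have himg : (μ '' 𝒰).Nonempty := hne.image μ
    have hbdd : BddBelow (μ '' 𝒰) := ⟨0, by
      rintro x ⟨U, hU, rfl⟩; rw [key]; exact hmnn _⟩
    rw [hμint]
    apply le_antisymm
    · refine le_csInf himg ?_
      rintro b ⟨U, hU, rfl⟩
      rw [key]
      exact hmono _ _ (fun k hk => hk U hU)
    · apply le_of_forall_pos_le_add
      intro ε hε
      obtain ⟨F, hF⟩ := tail ε hε
      have hchoice : ∀ k : ↥K, (k : α) ∉ ⋂₀ 𝒰 → ∃ U, U ∈ 𝒰 ∧ (k : α) ∉ U := by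
        intro k hk
        by_contra h
        push_neg at h
        exact hk (fun W hW => h W hW)
      choose! g hg1 hg2 using hchoice
      set F' : Finset ↥K := F.filter (fun k => (k : α) ∉ ⋂₀ 𝒰) with hF'def
      obtain ⟨U₀, hU₀, hU₀all⟩ := stmt8_dirFinset (· ⊇ ·)
        (fun h1 h2 => h2.trans h1) 𝒰 hdir hne F' g
        (fun k hk => hg1 k (Finset.mem_filter.1 hk).2)
      have hstep : ∀ k ∈ F, (T U₀).indicator f k ≤ (T (⋂₀ 𝒰)).indicator f k := by
        intro k hkF
        by_cases hk : (k : α) ∈ ⋂₀ 𝒰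
        · by_cases hkU : k ∈ T U₀
          · have hkT : k ∈ T (⋂₀ 𝒰) := hk
            rw [Set.indicator_of_mem hkU, Set.indicator_of_mem hkT]
          · rw [Set.indicator_of_notMem hkU]
            exact Set.indicator_nonneg (fun a _ => hfnn a) k
        · have hkF' : k ∈ F' := Finset.mem_filter.2 ⟨hkF, hk⟩
          have hnotT : k ∉ T U₀ := fun hmem => hg2 k hk (hU₀all k hkF' hmem)
          rw [Set.indicator_of_notMem hnotT]
          exact Set.indicator_nonneg (fun a _ => hfnn a) k
      have h1 : μ U₀ ≤ (∑ k ∈ F, (T U₀).indicator f k)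
          + ∑' k : {x : ↥K // x ∉ F}, f ↑k := by
        rw [key]; exact upper _ _
      have h2 : (∑ k ∈ F, (T U₀).indicator f k) ≤ ∑ k ∈ F, (T (⋂₀ 𝒰)).indicator f k :=
        Finset.sum_le_sum hstep
      have h3 : (∑ k ∈ F, (T (⋂₀ 𝒰)).indicator f k) ≤ m (T (⋂₀ 𝒰)) := lower _ _
      have h4 : sInf (μ '' 𝒰) ≤ μ U₀ := csInf_le hbdd ⟨U₀, hU₀, rfl⟩
      linarith
end

section
/- For every continuous dcpo A with a countable basis, there exists a CC-valuation μ on the system of Scott open sets of A: a function μ from the Scott open sets of A to [0, ∞] that is a normalized valuation (μ(∅)=0, μ(A)=1, monotone, and μ(U)+μ(V)=μ(U∩V)+μ(U∪V)), continuous (for every directed system of open sets {U_i}, μ(⋃_i U_i) = sup_i μ(U_i)), strongly non-degenerate (U ⊊ V open implies μ(U) < μ(V)), and co-continuous (for every filtered system of open sets {U_i}, μ(Int(⋂_i U_i)) = inf_i μ(U_i)). -/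
section Basic
variable {α : Type*} [Preorder α] {x y z : α}

lemma wayBelow_le (h : wayBelow x y) : x ≤ y := by
  obtain ⟨s, hs, hxs⟩ := h {y} ⟨y, rfl⟩
    (fun a ha b hb => by cases ha; cases hb; exact ⟨y, rfl, le_rfl, le_rfl⟩)
    y isLUB_singleton le_rfl
  cases hs; exact hxs

lemma le_wayBelow (hxy : x ≤ y) (h : wayBelow y z) : wayBelow x z := by
  intro S hne hdir b hb hzb
  obtain ⟨s, hs, hys⟩ := h S hne hdir b hb hzb
  exact ⟨s, hs, hxy.trans hys⟩

lemma wayBelow_le_trans (h : wayBelow x y) (hyz : y ≤ z) : wayBelow x z := by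
  intro S hne hdir b hb hzb
  exact h S hne hdir b hb (hyz.trans hzb)

lemma scottInt_subset {B : Set α} : scottInt B ⊆ B := by
  intro x hx; obtain ⟨U, ⟨_, hUB⟩, hxU⟩ := hx; exact hUB hxU

lemma subset_scottInt {U B : Set α} (hU : ScottOpen U) (h : U ⊆ B) : U ⊆ scottInt B :=
  fun x hx => ⟨U, ⟨hU, h⟩, hx⟩

end Basic

section Interp
variable {α : Type*} [PartialOrder α] {K : Set α}

lemma interp (hd : IsDcpo α) (hB : IsDomBasis K) {x y : α} (h : wayBelow x y) :
    ∃ z, z ∈ K ∧ wayBelow x z ∧ wayBelow z y := by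
  classical
  set D : Set α := {k | k ∈ K ∧ ∃ k', k' ∈ K ∧ wayBelow k k' ∧ wayBelow k' y} with hD
  -- D nonempty
  obtain ⟨k', hk'⟩ := (hB y).1
  obtain ⟨k, hk⟩ := (hB k').1
  have hDne : D.Nonempty := ⟨k, hk.1, k', hk'.1, hk.2, hk'.2⟩
  -- D directed
  have hDdir : DirectedOn (· ≤ ·) D := by
    rintro a ⟨haK, a', ha'K, haa', ha'y⟩ b ⟨hbK, b', hb'K, hbb', hb'y⟩
    obtain ⟨c', ⟨hc'K, hc'y⟩, hac', hbc'⟩ := (hB y).2.1 a' ⟨ha'K, ha'y⟩ b' ⟨hb'K, hb'y⟩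
    have hac : wayBelow a c' := wayBelow_le_trans haa' hac'
    have hbc : wayBelow b c' := wayBelow_le_trans hbb' hbc'
    obtain ⟨hne, hdir, hlub⟩ := hB c'
    obtain ⟨s₁, hs₁, has₁⟩ := hac _ hne hdir c' hlub le_rfl
    obtain ⟨s₂, hs₂, hbs₂⟩ := hbc _ hne hdir c' hlub le_rfl
    obtain ⟨s, hs, hs₁s, hs₂s⟩ := hdir s₁ hs₁ s₂ hs₂
    exact ⟨s, ⟨hs.1, c', hc'K, hs.2, hc'y⟩, has₁.trans hs₁s, hbs₂.trans hs₂s⟩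
  -- IsLUB D y
  have hlubD : IsLUB D y := by
    constructor
    · rintro d ⟨hdK, d', hd'K, hdd', hd'y⟩
      exact (wayBelow_le hdd').trans (wayBelow_le hd'y)
    · intro u hu
      have : ∀ k' ∈ {k ∈ K | wayBelow k y}, k' ≤ u := by
        rintro k' ⟨hk'K, hk'y⟩
        refine ((hB k').2.2).2 ?_
        rintro k ⟨hkK, hkk'⟩
        exact hu ⟨hkK, k', hk'K, hkk', hk'y⟩
      exact ((hB y).2.2).2 this
  obtain ⟨s, hsD, hxs⟩ := h D hDne hDdir y hlubD le_rfl
  obtain ⟨hsK, s', hs'K, hss', hs'y⟩ := hsD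
  exact ⟨s', hs'K, le_wayBelow hxs hss', hs'y⟩

lemma scottOpen_wayBelowSet (hd : IsDcpo α) (hB : IsDomBasis K) (x : α) :
    ScottOpen {z | wayBelow x z} := by
  constructor
  · intro a ha b hab; exact wayBelow_le_trans ha hab
  · intro S hne hdir b hb hxb
    obtain ⟨z, _, hxz, hzb⟩ := interp hd hB hxb
    obtain ⟨s, hs, hzs⟩ := hzb S hne hdir b hb le_rfl
    exact ⟨s, hs, wayBelow_le_trans hxz hzs⟩

end Interp

section Chain
variable {α : Type*} [PartialOrder α] {K : Set α}

open Classical in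
noncomputable def mid (hd : IsDcpo α) (hB : IsDomBasis K) (x y : α) : α :=
  if h : wayBelow x y then (interp hd hB h).choose else x

lemma mid_left (hd : IsDcpo α) (hB : IsDomBasis K) {x y : α} (h : wayBelow x y) :
    wayBelow x (mid hd hB x y) := by
  classical rw [mid, dif_pos h]; exact (interp hd hB h).choose_spec.2.1

lemma mid_right (hd : IsDcpo α) (hB : IsDomBasis K) {x y : α} (h : wayBelow x y) :
    wayBelow (mid hd hB x y) y := by
  classical rw [mid, dif_pos h]; exact (interp hd hB h).choose_spec.2.2

noncomputable def Ch (hd : IsDcpo α) (hB : IsDomBasis K) (x y : α) : ℕ → ℕ → α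
  | 0 => fun i => if i = 0 then x else y
  | (k+1) => fun i =>
      if i % 2 = 0 then Ch hd hB x y k (i / 2)
      else mid hd hB (Ch hd hB x y k (i / 2)) (Ch hd hB x y k (i / 2 + 1))

variable (hd : IsDcpo α) (hB : IsDomBasis K) (x y : α)

lemma Ch_zero : ∀ k, Ch hd hB x y k 0 = x
  | 0 => by simp [Ch]
  | (k+1) => by simp [Ch, Ch_zero k]

lemma Ch_top : ∀ k, Ch hd hB x y k (2 ^ k) = y
  | 0 => by simp [Ch]
  | (k+1) => by
      have hp : 2 ^ (k+1) = 2 * 2 ^ k := by rw [pow_succ]; ring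
      have h2 : 2 ^ (k+1) % 2 = 0 := by omega
      have h3 : 2 ^ (k+1) / 2 = 2 ^ k := by omega
      simp [Ch, h2, h3, Ch_top k]



lemma Ch_succ_even (k j : ℕ) : Ch hd hB x y (k+1) (2*j) = Ch hd hB x y k j := by
  have h1 : (2*j) % 2 = 0 := Nat.mul_mod_right 2 j
  have h2 : (2*j) / 2 = j := by omega
  simp only [Ch, h1, h2, if_pos rfl, if_true]

lemma Ch_succ_odd (k j : ℕ) : Ch hd hB x y (k+1) (2*j+1)
    = mid hd hB (Ch hd hB x y k j) (Ch hd hB x y k (j+1)) := by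
  have h1 : (2*j+1) % 2 = 1 := by omega
  have h2 : (2*j+1) / 2 = j := by omega
  simp only [Ch, h1, h2]
  rw [if_neg (by omega)]

variable {x y}

lemma Ch_adj (hxy : wayBelow x y) : ∀ k, ∀ i < 2 ^ k,
    wayBelow (Ch hd hB x y k i) (Ch hd hB x y k (i+1))
  | 0 => by
      intro i hi
      interval_cases i
      simpa [Ch] using hxy
  | (k+1) => by
      intro i hi
      have hp : 2 ^ (k+1) = 2 * 2 ^ k := by rw [pow_succ]; ring
      rcases Nat.even_or_odd i with ⟨j, hj⟩ | ⟨j, hj⟩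
      · have hj' : i = 2 * j := by omega
        subst hj'
        have hjk : j < 2 ^ k := by omega
        rw [Ch_succ_even hd hB x y k j, Ch_succ_odd hd hB x y k j]
        exact mid_left hd hB (Ch_adj hxy k j hjk)
      · have hj' : i = 2 * j + 1 := by omega
        subst hj'
        have hjk : j < 2 ^ k := by omega
        have e2 : 2 * j + 1 + 1 = 2 * (j + 1) := by ring
        rw [Ch_succ_odd hd hB x y k j, e2, Ch_succ_even hd hB x y k (j+1)]
        exact mid_right hd hB (Ch_adj hxy k j hjk)

lemma Ch_lift : ∀ (m k i : ℕ), Ch hd hB x y (k + m) (i * 2 ^ m) = Ch hd hB x y k i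
  | 0, k, i => by simp
  | (m+1), k, i => by
      have h1 : i * 2 ^ (m+1) = 2 * (i * 2 ^ m) := by ring
      have hm : (2 * (i * 2 ^ m)) % 2 = 0 := Nat.mul_mod_right 2 _
      have hdv : (2 * (i * 2 ^ m)) / 2 = i * 2 ^ m := by omega
      show Ch hd hB x y ((k + m) + 1) (i * 2 ^ (m+1)) = _
      simp only [Ch, h1, hm, hdv, if_pos rfl]
      exact Ch_lift m k i

lemma Ch_mono (hxy : wayBelow x y) {k i j : ℕ} (hij : i < j) (hj : j ≤ 2 ^ k) :
    wayBelow (Ch hd hB x y k i) (Ch hd hB x y k j) := by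
  induction j with
  | zero => omega
  | succ j ih =>
      rcases Nat.lt_or_ge i j with h | h
      · have h1 := ih h (by omega)
        have h2 := Ch_adj hd hB hxy k j (by omega)
        exact le_wayBelow (wayBelow_le h1) h2
      · have : i = j := by omega
        subst this
        exact Ch_adj hd hB hxy k i (by omega)

lemma Ch_cross (hxy : wayBelow x y) {k i k' j : ℕ} (hij : i * 2 ^ k' < j * 2 ^ k)
    (hj : j ≤ 2 ^ k') : wayBelow (Ch hd hB x y k i) (Ch hd hB x y k' j) := by
  have e1 : Ch hd hB x y k i = Ch hd hB x y (k + k') (i * 2 ^ k') := (Ch_lift hd hB k' k i).symm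
  have e2 : Ch hd hB x y k' j = Ch hd hB x y (k' + k) (j * 2 ^ k) := (Ch_lift hd hB k k' j).symm
  rw [e1, e2, Nat.add_comm k' k]
  exact Ch_mono hd hB hxy hij
    (by calc j * 2 ^ k ≤ 2 ^ k' * 2 ^ k := by exact Nat.mul_le_mul_right _ hj
          _ = 2 ^ (k + k') := by rw [← pow_add, Nat.add_comm])

lemma Ch_cross_eq {k i k' j : ℕ} (hij : i * 2 ^ k' = j * 2 ^ k) :
    Ch hd hB x y k i = Ch hd hB x y k' j := by
  have e1 := (Ch_lift hd hB (x := x) (y := y) k' k i).symm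
  have e2 := (Ch_lift hd hB (x := x) (y := y) k k' j).symm
  rw [e1, e2, Nat.add_comm k' k, hij]

lemma Ch_cross_le (hxy : wayBelow x y) {k i k' j : ℕ} (hij : i * 2 ^ k' ≤ j * 2 ^ k)
    (hj : j ≤ 2 ^ k') : Ch hd hB x y k i ≤ Ch hd hB x y k' j := by
  rcases Nat.lt_or_ge (i * 2 ^ k') (j * 2 ^ k) with h | h
  · exact wayBelow_le (Ch_cross hd hB hxy h hj)
  · exact le_of_eq (Ch_cross_eq hd hB (by omega))

end Chain

open scoped ENNReal NNReal

noncomputable def pval (d : ℕ × ℕ) : ℝ≥0 := (d.2 : ℝ≥0) / 2 ^ d.1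

lemma pval_le_iff {k i k' j : ℕ} : pval (k, i) ≤ pval (k', j) ↔ i * 2 ^ k' ≤ j * 2 ^ k := by
  rw [pval, pval]
  rw [div_le_div_iff₀ (by positivity) (by positivity)]
  rw [show ((i : ℝ≥0) * 2 ^ k' = ((i * 2 ^ k' : ℕ) : ℝ≥0)) by push_cast; ring,
      show ((j : ℝ≥0) * 2 ^ k = ((j * 2 ^ k : ℕ) : ℝ≥0)) by push_cast; ring]
  exact Nat.cast_le

lemma pval_lt_iff {k i k' j : ℕ} : pval (k, i) < pval (k', j) ↔ i * 2 ^ k' < j * 2 ^ k := by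
  rw [← not_le, ← not_le, pval_le_iff]

lemma pval_le_one {k i : ℕ} (h : i ≤ 2 ^ k) : pval (k, i) ≤ 1 := by
  rw [pval, div_le_one (by positivity)]
  exact_mod_cast (Nat.cast_le (α := ℝ≥0)).mpr h

lemma pval_zero {k : ℕ} : pval (k, 0) = 0 := by simp [pval]

section Elem
variable {α : Type*} [PartialOrder α] {K : Set α} (hd : IsDcpo α) (hB : IsDomBasis K)
variable {x y : α}

lemma elem_wb (hxy : wayBelow x y) {d d' : ℕ × ℕ} (h : pval d < pval d')
    (hv' : d'.2 ≤ 2 ^ d'.1) :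
    wayBelow (Ch hd hB x y d.1 d.2) (Ch hd hB x y d'.1 d'.2) :=
  Ch_cross hd hB hxy (pval_lt_iff.mp h) hv'

lemma elem_le (hxy : wayBelow x y) {d d' : ℕ × ℕ} (h : pval d ≤ pval d')
    (hv' : d'.2 ≤ 2 ^ d'.1) :
    Ch hd hB x y d.1 d.2 ≤ Ch hd hB x y d'.1 d'.2 :=
  Ch_cross_le hd hB hxy (pval_le_iff.mp h) hv'

end Elem

lemma dyadic_dense {u v : ℝ≥0} (huv : u < v) (hv : v ≤ 1) :
    ∃ d : ℕ × ℕ, d.2 ≤ 2 ^ d.1 ∧ u < pval d ∧ pval d < v := by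
  have hu' : (u : ℝ) < v := NNReal.coe_lt_coe.mpr huv
  have hv' : (v : ℝ) ≤ 1 := by exact_mod_cast hv
  obtain ⟨n, hn⟩ := exists_pow_lt_of_lt_one (by linarith : (0:ℝ) < (v:ℝ) - u)
    (by norm_num : (1/2 : ℝ) < 1)
  set i : ℕ := ⌊(u : ℝ) * 2 ^ n⌋₊ + 1 with hi
  have h2n : (0:ℝ) < 2 ^ n := by positivity
  have hfl : (u : ℝ) * 2 ^ n < i := by rw [hi]; push_cast; exact Nat.lt_floor_add_one _
  have hfl2 : (i : ℝ) ≤ (u : ℝ) * 2 ^ n + 1 := by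
    have := Nat.floor_le (by positivity : (0:ℝ) ≤ (u : ℝ) * 2 ^ n)
    push_cast [hi]
    linarith
  have hiv : (i : ℝ) / 2 ^ n < v := by
    rw [div_lt_iff₀ h2n]
    have h12 : ((1:ℝ)/2) ^ n * 2 ^ n = 1 := by
      rw [div_pow, one_pow, div_mul_cancel₀]
      positivity
    nlinarith [hn, h2n]
  have hui : (u : ℝ) < (i : ℝ) / 2 ^ n := by rw [lt_div_iff₀ h2n]; exact hfl
  have hin : i ≤ 2 ^ n := by
    have : (u : ℝ) * 2 ^ n < 2 ^ n := by nlinarith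
    have h4 : ⌊(u : ℝ) * 2 ^ n⌋₊ < 2 ^ n := by
      rw [Nat.floor_lt (by positivity)]
      exact_mod_cast this
    omega
  refine ⟨(n, i), hin, ?_, ?_⟩
  · rw [← NNReal.coe_lt_coe, pval]
    push_cast
    exact hui
  · rw [← NNReal.coe_lt_coe, pval]
    push_cast
    exact hiv

section Fpair
variable {α : Type*} [PartialOrder α] {K : Set α} (hd : IsDcpo α) (hB : IsDomBasis K)
variable (x y : α)

noncomputable def fpair (U : Set α) : ℝ≥0∞ :=
  ⨆ (d : ℕ × ℕ) (_ : d.2 ≤ 2 ^ d.1 ∧ Ch hd hB x y d.1 d.2 ∈ U),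
    1 - ((pval d : ℝ≥0) : ℝ≥0∞)

variable {x y}

lemma fpair_mono {U V : Set α} (h : U ⊆ V) : fpair hd hB x y U ≤ fpair hd hB x y V := by
  refine iSup₂_le fun d hdc => ?_
  exact le_iSup₂_of_le d ⟨hdc.1, h hdc.2⟩ le_rfl

lemma fpair_empty : fpair hd hB x y ∅ = 0 := by
  refine le_antisymm (iSup₂_le fun d hdc => absurd hdc.2 (Set.notMem_empty _)) bot_le

lemma fpair_le_one (U : Set α) : fpair hd hB x y U ≤ 1 :=
  iSup₂_le fun d _ => tsub_le_self

lemma fpair_univ : fpair hd hB x y Set.univ = 1 := by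
  refine le_antisymm (fpair_le_one hd hB _) ?_
  have h0 : ((0:ℕ), (0:ℕ)).2 ≤ 2 ^ ((0:ℕ), (0:ℕ)).1 ∧
      Ch hd hB x y 0 0 ∈ (Set.univ : Set α) := ⟨by norm_num, Set.mem_univ _⟩
  refine le_trans ?_ (le_iSup₂_of_le ((0:ℕ), (0:ℕ)) h0 le_rfl)
  simp [pval]

lemma fpair_union {U V : Set α} :
    fpair hd hB x y (U ∪ V) = fpair hd hB x y U ⊔ fpair hd hB x y V := by
  refine le_antisymm (iSup₂_le fun d hdc => ?_)
    (sup_le (fpair_mono hd hB Set.subset_union_left)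
      (fpair_mono hd hB Set.subset_union_right))
  rcases hdc.2 with h | h
  · exact le_sup_of_le_left (le_iSup₂_of_le d ⟨hdc.1, h⟩ le_rfl)
  · exact le_sup_of_le_right (le_iSup₂_of_le d ⟨hdc.1, h⟩ le_rfl)

lemma fpair_inter (hxy : wayBelow x y) {U V : Set α}
    (hU : ∀ a ∈ U, ∀ b, a ≤ b → b ∈ U) (hV : ∀ a ∈ V, ∀ b, a ≤ b → b ∈ V) :
    fpair hd hB x y (U ∩ V) = fpair hd hB x y U ⊓ fpair hd hB x y V := by
  refine le_antisymm
    (le_inf (fpair_mono hd hB Set.inter_subset_left)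
      (fpair_mono hd hB Set.inter_subset_right)) ?_
  refine le_of_forall_lt fun c hc => ?_
  rw [lt_inf_iff] at hc
  obtain ⟨hcU, hcV⟩ := hc
  rw [fpair, lt_iSup_iff] at hcU hcV
  obtain ⟨d, hd1⟩ := hcU
  obtain ⟨d', hd2⟩ := hcV
  have hdc : (d.2 ≤ 2 ^ d.1 ∧ Ch hd hB x y d.1 d.2 ∈ U) ∧ c < 1 - ((pval d : ℝ≥0) : ℝ≥0∞) := by
    by_cases h : d.2 ≤ 2 ^ d.1 ∧ Ch hd hB x y d.1 d.2 ∈ U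
    · exact ⟨h, by rwa [iSup_pos h] at hd1⟩
    · rw [iSup_neg h] at hd1; exact absurd hd1 (by simp)
  have hdc' : (d'.2 ≤ 2 ^ d'.1 ∧ Ch hd hB x y d'.1 d'.2 ∈ V) ∧
      c < 1 - ((pval d' : ℝ≥0) : ℝ≥0∞) := by
    by_cases h : d'.2 ≤ 2 ^ d'.1 ∧ Ch hd hB x y d'.1 d'.2 ∈ V
    · exact ⟨h, by rwa [iSup_pos h] at hd2⟩
    · rw [iSup_neg h] at hd2; exact absurd hd2 (by simp)
  rcases le_total (pval d) (pval d') with hle | hle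
  · have hmem : Ch hd hB x y d'.1 d'.2 ∈ U ∩ V :=
      ⟨hU _ hdc.1.2 _ (elem_le hd hB hxy hle hdc'.1.1), hdc'.1.2⟩
    exact lt_of_lt_of_le hdc'.2 (le_iSup₂_of_le d' ⟨hdc'.1.1, hmem⟩ le_rfl)
  · have hmem : Ch hd hB x y d.1 d.2 ∈ U ∩ V :=
      ⟨hdc.1.2, hV _ hdc'.1.2 _ (elem_le hd hB hxy hle hdc.1.1)⟩
    exact lt_of_lt_of_le hdc.2 (le_iSup₂_of_le d ⟨hdc.1.1, hmem⟩ le_rfl)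

lemma fpair_sUnion {𝒰 : Set (Set α)} :
    fpair hd hB x y (⋃₀ 𝒰) = ⨆ U ∈ 𝒰, fpair hd hB x y U := by
  refine le_antisymm (iSup₂_le fun d hdc => ?_) (iSup₂_le fun U hU =>
    fpair_mono hd hB (Set.subset_sUnion_of_mem hU))
  obtain ⟨U, hU, hmem⟩ := hdc.2
  exact le_iSup₂_of_le U hU (le_iSup₂_of_le d ⟨hdc.1, hmem⟩ le_rfl)

lemma fpair_cocont (hxy : wayBelow x y) {𝒰 : Set (Set α)} (hne : 𝒰.Nonempty)
    (h𝒰 : ∀ U ∈ 𝒰, ScottOpen U) :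
    (⨅ U ∈ 𝒰, fpair hd hB x y U) ≤ fpair hd hB x y (scottInt (⋂₀ 𝒰)) := by
  set t : ℝ≥0∞ := ⨅ U ∈ 𝒰, fpair hd hB x y U with ht
  refine le_of_forall_lt fun s hs => ?_
  obtain ⟨U₀, hU₀⟩ := hne
  have ht1 : t ≤ 1 := le_trans (biInf_le _ hU₀) (fpair_le_one hd hB _)
  have htne : t ≠ ∞ := (lt_of_le_of_lt ht1 ENNReal.one_lt_top).ne
  have hsne : s ≠ ∞ := (lt_of_le_of_lt (le_trans hs.le ht1) ENNReal.one_lt_top).ne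
  set t' : ℝ≥0 := t.toNNReal with ht'
  set s' : ℝ≥0 := s.toNNReal with hs'
  have hst' : s' < t' := by
    rw [ht', hs']
    exact ENNReal.toNNReal_lt_toNNReal hsne htne |>.mpr hs
  have ht'1 : t' ≤ 1 := by
    rw [ht', ← ENNReal.coe_le_one_iff]
    rwa [ENNReal.coe_toNNReal htne]
  have hs'1 : s' ≤ 1 := le_of_lt (lt_of_lt_of_le hst' ht'1)
  have huv : (1 : ℝ≥0) - t' < 1 - s' := tsub_lt_tsub_left_of_le ht'1 hst'
  obtain ⟨d₁, hv₁, hu₁, hub₁⟩ := dyadic_dense huv tsub_le_self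
  obtain ⟨d₂, hv₂, hu₂, hub₂⟩ := dyadic_dense hub₁ tsub_le_self
  -- elem d₁ belongs to every U in 𝒰
  have hmem₁ : ∀ U ∈ 𝒰, Ch hd hB x y d₁.1 d₁.2 ∈ U := by
    intro U hU
    have hfU : t ≤ fpair hd hB x y U := biInf_le _ hU
    have hlt : ((1 - pval d₁ : ℝ≥0) : ℝ≥0∞) < fpair hd hB x y U := by
      refine lt_of_lt_of_le ?_ hfU
      have : (1 - pval d₁ : ℝ≥0) < t' := by
        have h1 : (1 : ℝ≥0) - pval d₁ < 1 - (1 - t') :=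
          tsub_lt_tsub_left_of_le (pval_le_one hv₁) hu₁
        rwa [tsub_tsub_cancel_of_le ht'1] at h1
      calc ((1 - pval d₁ : ℝ≥0) : ℝ≥0∞) < (t' : ℝ≥0∞) := ENNReal.coe_lt_coe.mpr this
        _ = t := ENNReal.coe_toNNReal htne
    rw [fpair, lt_iSup_iff] at hlt
    obtain ⟨d₀, hd₀⟩ := hlt
    have hd₀c : (d₀.2 ≤ 2 ^ d₀.1 ∧ Ch hd hB x y d₀.1 d₀.2 ∈ U) ∧
        ((1 - pval d₁ : ℝ≥0) : ℝ≥0∞) < 1 - ((pval d₀ : ℝ≥0) : ℝ≥0∞) := by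
      by_cases h : d₀.2 ≤ 2 ^ d₀.1 ∧ Ch hd hB x y d₀.1 d₀.2 ∈ U
      · exact ⟨h, by rwa [iSup_pos h] at hd₀⟩
      · rw [iSup_neg h] at hd₀; exact absurd hd₀ (by simp)
    have hp : pval d₀ < pval d₁ := by
      by_contra hcon
      push_neg at hcon
      have : (1 : ℝ≥0∞) - ((pval d₀ : ℝ≥0) : ℝ≥0∞) ≤ ((1 - pval d₁ : ℝ≥0) : ℝ≥0∞) := by
        rw [show ((1 - pval d₁ : ℝ≥0) : ℝ≥0∞) = 1 - ((pval d₁ : ℝ≥0) : ℝ≥0∞) by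
          rw [ENNReal.coe_sub, ENNReal.coe_one]]
        exact tsub_le_tsub_left (ENNReal.coe_le_coe.mpr hcon) 1
      exact absurd (lt_of_lt_of_le hd₀c.2 this) (lt_irrefl _)
    exact (h𝒰 U hU).1 _ hd₀c.1.2 _ (wayBelow_le (elem_wb hd hB hxy hp hv₁))
  -- the open set ↑↑(elem d₁) sits inside ⋂₀ 𝒰
  have hsub : {z | wayBelow (Ch hd hB x y d₁.1 d₁.2) z} ⊆ ⋂₀ 𝒰 := by
    intro z hz
    intro U hU
    exact (h𝒰 U hU).1 _ (hmem₁ U hU) z (wayBelow_le hz)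
  have hmem₂ : Ch hd hB x y d₂.1 d₂.2 ∈ scottInt (⋂₀ 𝒰) :=
    subset_scottInt (scottOpen_wayBelowSet hd hB _) hsub (elem_wb hd hB hxy hu₂ hv₂)
  have hfin : ((1 - pval d₂ : ℝ≥0) : ℝ≥0∞) ≤ fpair hd hB x y (scottInt (⋂₀ 𝒰)) := by
    refine le_trans ?_ (le_iSup₂_of_le d₂ ⟨hv₂, hmem₂⟩ le_rfl)
    rw [ENNReal.coe_sub, ENNReal.coe_one]
  refine lt_of_lt_of_le ?_ hfin
  have hs'lt : s' < 1 - pval d₂ := by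
    have h1 : (1 : ℝ≥0) - (1 - s') < 1 - pval d₂ :=
      tsub_lt_tsub_left_of_le tsub_le_self hub₂
    rwa [tsub_tsub_cancel_of_le hs'1] at h1
  calc s = ((s' : ℝ≥0) : ℝ≥0∞) := (ENNReal.coe_toNNReal hsne).symm
    _ < ((1 - pval d₂ : ℝ≥0) : ℝ≥0∞) := ENNReal.coe_lt_coe.mpr hs'lt
end Fpair

section Sums
open scoped ENNReal

lemma tsum_split (f : ℕ → ℝ≥0∞) (N : ℕ) :
    ∑' n, f n = ∑ n ∈ Finset.range N, f n + ∑' n, f (n + N) := by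
  induction N with
  | zero => simp
  | succ N ih =>
      rw [ih, Finset.sum_range_succ]
      have h : ∑' n, f (n + N) = f N + ∑' n, f (n + (N + 1)) := by
        have h2 := tsum_eq_zero_add' (f := fun n => f (n + N)) ENNReal.summable
        simp only [Nat.zero_add] at h2
        rw [h2]
        congr 1
        apply tsum_congr
        intro n
        congr 1
        omega
      rw [h, ← add_assoc]

lemma weight_tsum : ∑' n : ℕ, (2⁻¹ : ℝ≥0∞) ^ (n + 1) = 1 := by
  have h : ∀ n : ℕ, (2⁻¹ : ℝ≥0∞) ^ (n + 1) = (2⁻¹ : ℝ≥0∞) ^ n * 2⁻¹ := fun n => pow_succ _ _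
  rw [tsum_congr h, ENNReal.tsum_mul_right, ENNReal.tsum_geometric]
  rw [ENNReal.one_sub_inv_two, inv_inv]
  exact ENNReal.mul_inv_cancel (by norm_num) (by norm_num)

lemma weight_tail (N : ℕ) : ∑' n : ℕ, (2⁻¹ : ℝ≥0∞) ^ (n + N + 1) = (2⁻¹ : ℝ≥0∞) ^ N := by
  have h : ∀ n : ℕ, (2⁻¹ : ℝ≥0∞) ^ (n + N + 1) = (2⁻¹ : ℝ≥0∞) ^ (n + 1) * (2⁻¹ : ℝ≥0∞) ^ N :=
    fun n => by rw [← pow_add]; congr 1; omega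
  rw [tsum_congr h, ENNReal.tsum_mul_right, weight_tsum, one_mul]

variable {α : Type*}

lemma exists_common_lb {𝒰 : Set (Set α)} (hne : 𝒰.Nonempty)
    (hfilt : DirectedOn (· ⊇ ·) 𝒰) (s : Finset ℕ) (Us : ℕ → Set α)
    (h : ∀ n ∈ s, Us n ∈ 𝒰) : ∃ W ∈ 𝒰, ∀ n ∈ s, W ⊆ Us n := by
  classical
  induction s using Finset.induction with
  | empty => obtain ⟨U₀, h₀⟩ := hne; exact ⟨U₀, h₀, by simp⟩
  | @insert a s ha ih =>
      obtain ⟨W, hW, hWs⟩ := ih fun n hn => h n (Finset.mem_insert_of_mem hn)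
      obtain ⟨Z, hZ, hZ1, hZ2⟩ := hfilt W hW (Us a) (h a (Finset.mem_insert_self a s))
      refine ⟨Z, hZ, fun n hn => ?_⟩
      rcases Finset.mem_insert.mp hn with rfl | hn
      · exact hZ2
      · exact subset_trans hZ1 (hWs n hn)

lemma tsum_biSup_directed {𝒰 : Set (Set α)} (hne : 𝒰.Nonempty)
    (hdir : DirectedOn (· ⊆ ·) 𝒰) (g : ℕ → Set α → ℝ≥0∞)
    (hmono : ∀ n (U V : Set α), U ⊆ V → g n U ≤ g n V) :
    ∑' n, ⨆ U ∈ 𝒰, g n U = ⨆ U ∈ 𝒰, ∑' n, g n U := by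
  classical
  refine le_antisymm ?_ (iSup₂_le fun U hU => ENNReal.tsum_le_tsum fun n =>
    le_iSup₂_of_le U hU le_rfl)
  rw [ENNReal.tsum_eq_iSup_sum]
  refine iSup_le fun fs => ?_
  have key : ∑ n ∈ fs, ⨆ U ∈ 𝒰, g n U ≤ ⨆ U ∈ 𝒰, ∑ n ∈ fs, g n U := by
    induction fs using Finset.induction with
    | empty =>
        obtain ⟨U₀, h₀⟩ := hne
        simpa using le_iSup₂_of_le U₀ h₀ (zero_le _)
    | @insert a s ha ih =>
        rw [Finset.sum_insert ha]
        have h1 : (⨆ U ∈ 𝒰, g a U) + (⨆ U ∈ 𝒰, ∑ n ∈ s, g n U)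
            ≤ ⨆ U ∈ 𝒰, (g a U + ∑ n ∈ s, g n U) := by
          rw [iSup_subtype', iSup_subtype', iSup_subtype']
          rw [ENNReal.iSup_add_iSup]
          intro i j
          obtain ⟨W, hW, hiW, hjW⟩ := hdir i.1 i.2 j.1 j.2
          exact ⟨⟨W, hW⟩, add_le_add (hmono a _ _ hiW)
            (Finset.sum_le_sum fun n _ => hmono n _ _ hjW)⟩
        refine le_trans (add_le_add_right ih _) (le_trans h1 (iSup₂_le fun U hU => ?_))
        refine le_iSup₂_of_le U hU ?_
        rw [Finset.sum_insert ha]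
      
  exact key.trans (iSup₂_le fun U hU => le_iSup₂_of_le U hU (ENNReal.sum_le_tsum fs))

lemma iInf_tsum_filtered {𝒰 : Set (Set α)} (hne : 𝒰.Nonempty)
    (hfilt : DirectedOn (· ⊇ ·) 𝒰) (g : ℕ → Set α → ℝ≥0∞)
    (hmono : ∀ n (U V : Set α), U ⊆ V → g n U ≤ g n V)
    (hbd : ∀ n U, g n U ≤ (2⁻¹ : ℝ≥0∞) ^ (n + 1)) :
    (⨅ U ∈ 𝒰, ∑' n, g n U) ≤ ∑' n, ⨅ U ∈ 𝒰, g n U := by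
  classical
  set B : ℝ≥0∞ := ∑' n, ⨅ U ∈ 𝒰, g n U with hB
  refine ENNReal.le_of_forall_pos_le_add fun ε hε hBt => ?_
  have hεne : ((ε : ℝ≥0∞)) ≠ 0 := by exact_mod_cast hε.ne'
  obtain ⟨N, hN⟩ := ENNReal.exists_inv_two_pow_lt
    (show (ε : ℝ≥0∞) / 2 ≠ 0 by simp [hεne])
  set δ : ℝ≥0∞ := (ε : ℝ≥0∞) / 2 * ((N : ℝ≥0∞) + 1)⁻¹ with hδ
  have hδne : δ ≠ 0 := by
    rw [hδ]
    refine mul_ne_zero (by simp [hεne]) (ENNReal.inv_ne_zero.mpr (by simp))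
  -- pick good U_n for n < N
  have hchoice : ∀ n, ∃ U ∈ 𝒰, g n U < (⨅ V ∈ 𝒰, g n V) + δ := by
    intro n
    obtain ⟨U₀, h₀⟩ := hne
    have hfin : (⨅ V ∈ 𝒰, g n V) ≠ ∞ :=
      ne_top_of_le_ne_top (ENNReal.pow_ne_top (by norm_num))
        ((biInf_le _ h₀).trans (hbd n U₀))
    have hlt : (⨅ V ∈ 𝒰, g n V) < (⨅ V ∈ 𝒰, g n V) + δ :=
      ENNReal.lt_add_right hfin hδne
    rw [iInf_lt_iff] at hlt
    obtain ⟨U, hU⟩ := hlt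
    by_cases h : U ∈ 𝒰
    · rw [iInf_pos h] at hU; exact ⟨U, h, hU⟩
    · rw [iInf_neg h] at hU
      exact absurd hU (by simp)
  choose Us hUs hUslt using hchoice
  obtain ⟨W, hW, hWsub⟩ := exists_common_lb hne hfilt (Finset.range N) Us
    fun n _ => hUs n
  have step1 : (⨅ U ∈ 𝒰, ∑' n, g n U) ≤ ∑' n, g n W := biInf_le _ hW
  have step2 : ∑' n, g n W ≤ ∑ n ∈ Finset.range N, g n W + (2⁻¹ : ℝ≥0∞) ^ N := by
    rw [tsum_split (fun n => g n W) N]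
    refine add_le_add_right ?_ _
    calc ∑' n, g (n + N) W ≤ ∑' n, (2⁻¹ : ℝ≥0∞) ^ (n + N + 1) :=
          ENNReal.tsum_le_tsum fun n => hbd _ _
      _ = (2⁻¹ : ℝ≥0∞) ^ N := weight_tail N
  have step3 : ∑ n ∈ Finset.range N, g n W ≤ ∑ n ∈ Finset.range N, ((⨅ V ∈ 𝒰, g n V) + δ) := by
    refine Finset.sum_le_sum fun n hn => ?_
    exact le_trans (hmono n _ _ (hWsub n hn)) (hUslt n).le
  have step4 : ∑ n ∈ Finset.range N, ((⨅ V ∈ 𝒰, g n V) + δ) ≤ B + (ε : ℝ≥0∞) / 2 := by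
    rw [Finset.sum_add_distrib]
    refine add_le_add ?_ ?_
    · exact le_trans (ENNReal.sum_le_tsum _) le_rfl
    · rw [Finset.sum_const, Finset.card_range, nsmul_eq_mul, hδ]
      calc (N : ℝ≥0∞) * ((ε : ℝ≥0∞) / 2 * ((N : ℝ≥0∞) + 1)⁻¹)
          ≤ ((N : ℝ≥0∞) + 1) * ((ε : ℝ≥0∞) / 2 * ((N : ℝ≥0∞) + 1)⁻¹) := by
            exact mul_le_mul_left (by simp) _
        _ = (ε : ℝ≥0∞) / 2 * (((N : ℝ≥0∞) + 1) * ((N : ℝ≥0∞) + 1)⁻¹) := by ring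
        _ = (ε : ℝ≥0∞) / 2 := by
            rw [ENNReal.mul_inv_cancel (by simp) (by simp), mul_one]
  calc (⨅ U ∈ 𝒰, ∑' n, g n U) ≤ ∑' n, g n W := step1
    _ ≤ ∑ n ∈ Finset.range N, g n W + (2⁻¹ : ℝ≥0∞) ^ N := step2
    _ ≤ (B + (ε : ℝ≥0∞) / 2) + (ε : ℝ≥0∞) / 2 := by
        refine add_le_add (le_trans step3 step4) hN.le
    _ = B + (ε : ℝ≥0∞) := by rw [add_assoc, ENNReal.add_halves]

end Sums

/-- every continuous dcpo with a countable basis carries a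
CC-valuation on its Scott open sets: a `[0,∞]`-valued normalized valuation which
is continuous, strongly non-degenerate, and co-continuous. -/
theorem stmt10 {α : Type*} [PartialOrder α]
    (hd : IsDcpo α) (K : Set α) (hKc : K.Countable) (hB : IsDomBasis K) :
    ∃ μ : Set α → ENNReal,
      μ ∅ = 0 ∧ μ Set.univ = 1 ∧
      (∀ U V : Set α, ScottOpen U → ScottOpen V → U ⊆ V → μ U ≤ μ V) ∧
      (∀ U V : Set α, ScottOpen U → ScottOpen V → μ U + μ V = μ (U ∩ V) + μ (U ∪ V)) ∧
      (∀ 𝒰 : Set (Set α), 𝒰.Nonempty → (∀ U ∈ 𝒰, ScottOpen U) → DirectedOn (· ⊆ ·) 𝒰 →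
        μ (⋃₀ 𝒰) = ⨆ U ∈ 𝒰, μ U) ∧
      (∀ U V : Set α, ScottOpen U → ScottOpen V → U ⊂ V → μ U < μ V) ∧
      (∀ 𝒰 : Set (Set α), 𝒰.Nonempty → (∀ U ∈ 𝒰, ScottOpen U) → DirectedOn (· ⊇ ·) 𝒰 →
        μ (scottInt (⋂₀ 𝒰)) = ⨅ U ∈ 𝒰, μ U) := by
  classical
  -- α is nonempty
  obtain ⟨b₀, -⟩ := hd ∅ (fun x hx => absurd hx (Set.notMem_empty x))
  -- the countable nonempty set of way-below pairs from the basis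
  set P : Set (α × α) := {p | p.1 ∈ K ∧ p.2 ∈ K ∧ wayBelow p.1 p.2} with hP
  have hPc : P.Countable := (hKc.prod hKc).mono (fun p hp => Set.mem_prod.mpr ⟨hp.1, hp.2.1⟩)
  have hPne : P.Nonempty := by
    obtain ⟨k₁, hk₁K, hk₁⟩ := (hB b₀).1
    obtain ⟨k₂, hk₂K, hk₂⟩ := (hB k₁).1
    exact ⟨(k₂, k₁), hk₂K, hk₁K, hk₂⟩
  obtain ⟨e, hePr⟩ := hPc.exists_eq_range hPne
  have heP : ∀ n, e n ∈ P := fun n => hePr ▸ Set.mem_range_self n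
  have hwb : ∀ n, wayBelow (e n).1 (e n).2 := fun n => (heP n).2.2
  -- the valuation
  set g : ℕ → Set α → ℝ≥0∞ :=
    fun n U => (2⁻¹ : ℝ≥0∞) ^ (n + 1) * fpair hd hB (e n).1 (e n).2 U with hg
  set μ : Set α → ℝ≥0∞ := fun U => ∑' n, g n U with hμ
  have hgmono : ∀ n (U V : Set α), U ⊆ V → g n U ≤ g n V :=
    fun n U V h => mul_le_mul_right (fpair_mono hd hB h) _
  have hgbd : ∀ n (U : Set α), g n U ≤ (2⁻¹ : ℝ≥0∞) ^ (n + 1) := fun n U => by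
    rw [hg]
    exact le_trans (mul_le_mul_right (fpair_le_one hd hB U) _) (by rw [mul_one])
  have hμmono : ∀ U V : Set α, U ⊆ V → μ U ≤ μ V :=
    fun U V h => ENNReal.tsum_le_tsum fun n => hgmono n U V h
  have hμne : ∀ U : Set α, μ U ≠ ∞ := by
    intro U
    refine ne_top_of_le_ne_top ?_ (ENNReal.tsum_le_tsum fun n => hgbd n U)
    rw [weight_tsum]
    exact ENNReal.one_ne_top
  refine ⟨μ, ?_, ?_, ?_, ?_, ?_, ?_, ?_⟩
  · -- empty
    rw [hμ]
    simp only [hg, fpair_empty, mul_zero]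
    exact tsum_zero
  · -- univ
    rw [hμ]
    simp only [hg, fpair_univ, mul_one]
    exact weight_tsum
  · -- monotone
    exact fun U V _ _ h => hμmono U V h
  · -- modular
    intro U V hU hV
    rw [hμ]
    simp only
    rw [← ENNReal.tsum_add, ← ENNReal.tsum_add]
    refine tsum_congr fun n => ?_
    rw [hg]
    simp only
    rw [← mul_add, ← mul_add]
    congr 1
    rw [fpair_inter hd hB (hwb n) hU.1 hV.1, fpair_union hd hB]
    exact (min_add_max _ _).symm
  · -- continuity
    intro 𝒰 hne hopen hdir
    rw [hμ]
    simp only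
    have h1 : ∀ n, fpair hd hB (e n).1 (e n).2 (⋃₀ 𝒰)
        = ⨆ U ∈ 𝒰, fpair hd hB (e n).1 (e n).2 U := fun n => fpair_sUnion hd hB
    have h2 : ∀ n, g n (⋃₀ 𝒰) = ⨆ U ∈ 𝒰, g n U := by
      intro n
      rw [hg]
      simp only
      rw [h1 n]
      rw [ENNReal.mul_iSup]
      refine iSup_congr fun U => ?_
      rw [ENNReal.mul_iSup]
    rw [tsum_congr h2]
    exact tsum_biSup_directed hne hdir g hgmono
  · -- strong non-degeneracy
    intro U V hU hV hUV
    obtain ⟨x₀, hx₀V, hx₀U⟩ := Set.exists_of_ssubset hUV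
    obtain ⟨hSne, hSdir, hSlub⟩ := hB x₀
    obtain ⟨b, ⟨hbK, hbx⟩, hbV⟩ := hV.2 _ hSne hSdir x₀ hSlub hx₀V
    obtain ⟨z, hzK, hbz, hzx⟩ := interp hd hB hbx
    have hp₀ : ((b, z) : α × α) ∈ P := ⟨hbK, hzK, hbz⟩
    obtain ⟨n₀, hn₀⟩ : ∃ n, e n = (b, z) := by
      have : ((b, z) : α × α) ∈ Set.range e := hePr ▸ hp₀
      exact this
    have hfU : fpair hd hB (e n₀).1 (e n₀).2 U = 0 := by
      rw [hn₀]
      refine le_antisymm (iSup₂_le fun d hdc => absurd ?_ hx₀U) bot_le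
      have h1 : Ch hd hB b z d.1 d.2 ≤ Ch hd hB b z d.1 (2 ^ d.1) := by
        refine elem_le (d' := (d.1, 2 ^ d.1)) hd hB hbz ?_ le_rfl
        rw [pval_le_iff]
        exact Nat.mul_le_mul_right _ hdc.1
      rw [Ch_top] at h1
      have hzU : z ∈ U := hU.1 _ hdc.2 _ h1
      exact hU.1 _ hzU _ (wayBelow_le hzx)
    have hfV : (1 : ℝ≥0∞) ≤ fpair hd hB (e n₀).1 (e n₀).2 V := by
      rw [hn₀]
      have h0 : ((0:ℕ), (0:ℕ)).2 ≤ 2 ^ ((0:ℕ), (0:ℕ)).1 ∧ Ch hd hB b z 0 0 ∈ V := by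
        refine ⟨by norm_num, ?_⟩
        rw [Ch_zero]
        exact hbV
      refine le_trans ?_ (le_iSup₂_of_le ((0:ℕ), (0:ℕ)) h0 le_rfl)
      simp [pval]
    rw [hμ]
    simp only
    have hVfin : (∑' n, g n U) ≠ ⊤ := hμne U
    refine ENNReal.tsum_lt_tsum (i := n₀) hVfin (fun n => hgmono n U V hUV.1) ?_
    rw [hg]
    simp only
    rw [hfU, mul_zero]
    refine lt_of_lt_of_le ?_ (mul_le_mul_right hfV _)
    rw [mul_one]
    exact ENNReal.pow_pos (by norm_num) _
  · -- co-continuity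
    intro 𝒰 hne hopen hfilt
    refine le_antisymm ?_ ?_
    · refine le_iInf fun U => le_iInf fun hU => ?_
      exact hμmono _ _ (subset_trans scottInt_subset (Set.sInter_subset_of_mem hU))
    · have step1 : (⨅ U ∈ 𝒰, μ U) ≤ ∑' n, ⨅ U ∈ 𝒰, g n U :=
        iInf_tsum_filtered hne hfilt g hgmono hgbd
      refine le_trans step1 (ENNReal.tsum_le_tsum fun n => ?_)
      have h3 : (⨅ U ∈ 𝒰, g n U)
          = (2⁻¹ : ℝ≥0∞) ^ (n + 1) * ⨅ U ∈ 𝒰, fpair hd hB (e n).1 (e n).2 U := by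
        rw [hg]
        simp only
        rw [iInf_subtype', iInf_subtype']
        haveI : Nonempty ↥𝒰 := hne.to_subtype
        rw [ENNReal.mul_iInf (fun h => absurd h (by norm_num))]
      rw [h3, hg]
      simp only
      refine mul_le_mul_right ?_ _
      exact le_trans (le_of_eq (by rfl)) (fpair_cocont hd hB (hwb n) hne hopen)
end

section
/- Let A be a bounded-complete continuous dcpo (a continuous Scott domain) with countable basis K containing the least element ⊥. Let w : K → ℝ satisfy w(⊥) = 0, w(k) > 0 for k ≠ ⊥, and ∑_{k∈K} w(k) = 1. For x ∈ A put K_x = {k ∈ K | k ≪ x} and define u(x,y) = 1 − ∑_{k ∈ K_x ∩ K_y} w(k). Then: (a) u is a partial metric: u(x,y) = u(y,x); u(x,x) ≤ u(x,y); if x ⊑ y then u(x,x) = u(x,y), and if x ⋢ y then u(x,x) < u(x,y); and u(x,z) ≤ u(x,y) + u(y,z) − u(y,y); (b) u is Scott continuous as a map into the reals with reversed order: u is antitone in each argument and, for every directed B ⊆ A and y ∈ A, u(⊔B, y) = inf_{x∈B} u(x,y); (c) the relaxed metric topology determined by u — in which U ⊆ A is open iff for every x ∈ U there is ε > u(x,x)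 with {y ∈ A | u(x,y) < ε} ⊆ U — coincides with the Scott topology on A. -/
section Stmt11Aux

variable {α : Type*}

lemma wb_mono_right [Preorder α] {k x y : α} (h : wayBelow k x) (hxy : x ≤ y) : wayBelow k y :=
  fun S hS hd b hb hyb => h S hS hd b hb (hxy.trans hyb)

lemma wb_mono_left [Preorder α] {k' k x : α} (hk : k' ≤ k) (h : wayBelow k x) : wayBelow k' x :=
  fun S hS hd b hb hxb => by
    obtain ⟨s, hs, hks⟩ := h S hS hd b hb hxb
    exact ⟨s, hs, hk.trans hks⟩

lemma wb_le [Preorder α] {k x : α} (h : wayBelow k x) : k ≤ x := by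
  obtain ⟨s, hs, hks⟩ := h {x} ⟨x, rfl⟩
    (fun a ha b hb => ⟨x, rfl, le_of_eq ha, le_of_eq hb⟩) x isLUB_singleton le_rfl
  rw [Set.mem_singleton_iff] at hs
  rwa [hs] at hks

lemma interp_s11 [Preorder α] {K : Set α} (hK : IsDomBasis K) {k b : α}
    (hk : wayBelow k b) : ∃ d ∈ K, wayBelow k d ∧ wayBelow d b := by
  set T : Set α := {c | c ∈ K ∧ ∃ d ∈ K, wayBelow c d ∧ wayBelow d b} with hT
  obtain ⟨⟨d, hdK, hdb⟩, hdir_b, hlub_b⟩ := hK b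
  obtain ⟨⟨c, hcK, hcd⟩, -, -⟩ := hK d
  have hTne : T.Nonempty := ⟨c, hcK, d, hdK, hcd, hdb⟩
  have hTdir : DirectedOn (· ≤ ·) T := by
    rintro c₁ ⟨hc₁K, d₁, hd₁K, hc₁d₁, hd₁b⟩ c₂ ⟨hc₂K, d₂, hd₂K, hc₂d₂, hd₂b⟩
    obtain ⟨d₃, hd₃, h₁₃, h₂₃⟩ := hdir_b d₁ ⟨hd₁K, hd₁b⟩ d₂ ⟨hd₂K, hd₂b⟩
    obtain ⟨-, hdir₃, -⟩ := hK d₃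
    obtain ⟨c₃, hc₃, h₁, h₂⟩ := hdir₃ c₁ ⟨hc₁K, wb_mono_right hc₁d₁ h₁₃⟩
      c₂ ⟨hc₂K, wb_mono_right hc₂d₂ h₂₃⟩
    exact ⟨c₃, ⟨hc₃.1, d₃, hd₃.1, hc₃.2, hd₃.2⟩, h₁, h₂⟩
  have hTlub : IsLUB T b := by
    constructor
    · rintro c ⟨hcK, d, hdK, hcd, hdb⟩
      exact (wb_le hcd).trans (wb_le hdb)
    · intro v hv
      apply hlub_b.2
      rintro d ⟨hdK, hdb⟩
      obtain ⟨-, -, hlub_d⟩ := hK d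
      apply hlub_d.2
      rintro c ⟨hcK, hcd⟩
      exact hv ⟨hcK, d, hdK, hcd, hdb⟩
  obtain ⟨c, hcT, hkc⟩ := hk T hTne hTdir b hTlub le_rfl
  obtain ⟨hcK, d, hdK, hcd, hdb⟩ := hcT
  exact ⟨d, hdK, wb_mono_left hkc hcd, hdb⟩

/-- The set of basis elements way below `x`. -/
def SK [Preorder α] (K : Set α) (x : α) : Set α := {k ∈ K | wayBelow k x}

lemma SK_mono [Preorder α] {K : Set α} {x y : α} (hxy : x ≤ y) : SK K x ⊆ SK K y :=
  fun k hk => ⟨hk.1, wb_mono_right hk.2 hxy⟩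

lemma SK_subset [Preorder α] {K : Set α} {x : α} : SK K x ⊆ K := fun _ hk => hk.1

/-- The weight of a set of basis elements. -/
noncomputable def Fw (w : α → ℝ) (A : Set α) : ℝ := ∑' k : α, A.indicator w k

lemma ind_nonneg {w : α → ℝ} {K : Set α} (hwnn : ∀ k ∈ K, 0 ≤ w k)
    {A : Set α} (hA : A ⊆ K) (k : α) : 0 ≤ A.indicator w k := by
  by_cases h : k ∈ A
  · rw [Set.indicator_of_mem h]; exact hwnn k (hA h)
  · rw [Set.indicator_of_notMem h]

lemma ind_le {w : α → ℝ} {K : Set α} (hwnn : ∀ k ∈ K, 0 ≤ w k)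
    {A B : Set α} (hAB : A ⊆ B) (hB : B ⊆ K) (k : α) :
    A.indicator w k ≤ B.indicator w k := by
  by_cases h : k ∈ A
  · rw [Set.indicator_of_mem h, Set.indicator_of_mem (hAB h)]
  · rw [Set.indicator_of_notMem h]
    exact ind_nonneg hwnn hB k

lemma summable_ind {w : α → ℝ} {K : Set α} (hwnn : ∀ k ∈ K, 0 ≤ w k)
    (hsumK : Summable (K.indicator w)) {A : Set α} (hA : A ⊆ K) :
    Summable (A.indicator w) :=
  Summable.of_nonneg_of_le (ind_nonneg hwnn hA) (ind_le hwnn hA Set.Subset.rfl) hsumK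

lemma Fw_mono {w : α → ℝ} {K : Set α} (hwnn : ∀ k ∈ K, 0 ≤ w k)
    (hsumK : Summable (K.indicator w)) {A B : Set α} (hAB : A ⊆ B) (hB : B ⊆ K) :
    Fw w A ≤ Fw w B :=
  Summable.tsum_le_tsum (ind_le hwnn hAB hB) (summable_ind hwnn hsumK (hAB.trans hB))
    (summable_ind hwnn hsumK hB)

lemma Fw_lt {w : α → ℝ} {K : Set α} (hwnn : ∀ k ∈ K, 0 ≤ w k)
    (hsumK : Summable (K.indicator w)) {A B : Set α} (hAB : A ⊆ B) (hB : B ⊆ K)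
    {k : α} (hkB : k ∈ B) (hkA : k ∉ A) (hk : 0 < w k) : Fw w A < Fw w B :=
  Summable.tsum_lt_tsum (ind_le hwnn hAB hB)
    (by rw [Set.indicator_of_notMem hkA, Set.indicator_of_mem hkB]; exact hk)
    (summable_ind hwnn hsumK (hAB.trans hB)) (summable_ind hwnn hsumK hB)

lemma Fw_union {w : α → ℝ} {K : Set α} (hwnn : ∀ k ∈ K, 0 ≤ w k)
    (hsumK : Summable (K.indicator w)) {A B : Set α} (hA : A ⊆ K) (hB : B ⊆ K)
    (hdisj : Disjoint A B) : Fw w (A ∪ B) = Fw w A + Fw w B := by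
  unfold Fw
  rw [Set.indicator_union_of_disjoint hdisj]
  exact Summable.tsum_add (summable_ind hwnn hsumK hA) (summable_ind hwnn hsumK hB)

lemma Fw_inter_union {w : α → ℝ} {K : Set α} (hwnn : ∀ k ∈ K, 0 ≤ w k)
    (hsumK : Summable (K.indicator w)) {A B : Set α} (hA : A ⊆ K) (hB : B ⊆ K) :
    Fw w (A ∪ B) + Fw w (A ∩ B) = Fw w A + Fw w B := by
  have hdA : A \ B ⊆ K := fun k hk => hA hk.1
  have hiA : A ∩ B ⊆ K := fun k hk => hA hk.1
  have h1 : Fw w (A ∪ B) = Fw w (A \ B) + Fw w B := by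
    rw [← Fw_union hwnn hsumK hdA hB (Set.disjoint_left.mpr fun a ha hb => ha.2 hb),
      Set.diff_union_self]
  have h2 : Fw w A = Fw w (A \ B) + Fw w (A ∩ B) := by
    rw [← Fw_union hwnn hsumK hdA hiA (Set.disjoint_left.mpr fun a ha hb => ha.2 hb.2),
      Set.diff_union_inter]
  linarith

lemma Fw_singleton (w : α → ℝ) (s : α) : Fw w {s} = w s := by
  unfold Fw
  rw [← tsum_subtype, tsum_singleton]

lemma Fw_diff_singleton {w : α → ℝ} {K : Set α} (hwnn : ∀ k ∈ K, 0 ≤ w k)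
    (hsumK : Summable (K.indicator w)) {A : Set α} (hA : A ⊆ K) {s : α} (hs : s ∈ A) :
    Fw w A = Fw w (A \ {s}) + w s := by
  have h1 : Fw w ((A \ {s}) ∪ {s}) = Fw w (A \ {s}) + Fw w {s} :=
    Fw_union hwnn hsumK (fun k hk => hA hk.1)
      (fun k hk => hA (Set.mem_singleton_iff.mp hk ▸ hs))
      (Set.disjoint_left.mpr fun a ha hb => ha.2 hb)
  rw [Set.diff_union_of_subset (Set.singleton_subset_iff.mpr hs), Fw_singleton] at h1
  exact h1

lemma directed_finset_SK [Preorder α] {B : Set α} (hdir : DirectedOn (· ≤ ·) B)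
    (hne : B.Nonempty) {K : Set α} (t : Finset α) (h : ∀ k ∈ t, ∃ x ∈ B, k ∈ SK K x) :
    ∃ x ∈ B, ∀ k ∈ t, k ∈ SK K x := by
  classical
  induction t using Finset.induction_on with
  | empty => obtain ⟨x, hx⟩ := hne; exact ⟨x, hx, by simp⟩
  | @insert a t ha ih =>
    obtain ⟨x, hxB, hx⟩ := ih (fun k hk => h k (Finset.mem_insert_of_mem hk))
    obtain ⟨y, hyB, hy⟩ := h a (Finset.mem_insert_self a t)
    obtain ⟨z, hzB, hxz, hyz⟩ := hdir x hxB y hyB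
    refine ⟨z, hzB, fun k hk => ?_⟩
    rcases Finset.mem_insert.mp hk with rfl | hk
    · exact SK_mono hyz hy
    · exact SK_mono hxz (hx k hk)

end Stmt11Aux

/-- on a bounded complete continuous dcpo with countable basis `K`
containing `⊥`, with weights `w` (zero at `⊥`, positive elsewhere, total sum `1`),
the function `u x y = 1 − ∑_{k ∈ K_x ∩ K_y} w k` is a partial metric, is Scott
continuous (antitone, turning directed lubs into infima), and its relaxed metric
topology is the Scott topology. -/
theorem stmt11 {α : Type*} [PartialOrder α]
    (hd : IsDcpo α) (hb : BoundedComplete α)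
    (K : Set α) (hKc : K.Countable) (hK : IsDomBasis K)
    (bot : α) (hbot : ∀ a : α, bot ≤ a) (hbotK : bot ∈ K)
    (w : α → ℝ) (hw0 : w bot = 0) (hwpos : ∀ k ∈ K, k ≠ bot → 0 < w k)
    (hsum : Summable fun k : K => w (k : α))
    (hsum1 : ∑' k : K, w (k : α) = 1)
    (u : α → α → ℝ)
    (hu : ∀ x y : α,
      u x y = 1 - ∑' k : ↥({k ∈ K | wayBelow k x} ∩ {k ∈ K | wayBelow k y}), w (k : α)) :
    -- (a) u is a partial metric
    (∀ x y : α, u x y = u y x) ∧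
    (∀ x y : α, u x x ≤ u x y) ∧
    (∀ x y : α, x ≤ y → u x x = u x y) ∧
    (∀ x y : α, ¬ x ≤ y → u x x < u x y) ∧
    (∀ x y z : α, u x z ≤ u x y + u y z - u y y) ∧
    -- (b) u is Scott continuous into the reals with reversed order
    (∀ x x' y : α, x ≤ x' → u x' y ≤ u x y) ∧
    (∀ (B : Set α) (y b : α), B.Nonempty → DirectedOn (· ≤ ·) B → IsLUB B b →
      u b y = sInf ((fun x => u x y) '' B)) ∧
    -- (c) the relaxed metric topology coincides with the Scott topology
    (∀ U : Set α, ScottOpen U ↔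
      ∀ x ∈ U, ∃ ε : ℝ, u x x < ε ∧ {y : α | u x y < ε} ⊆ U) := by
  classical
  -- basic facts about the weights
  have hwnn : ∀ k ∈ K, 0 ≤ w k := by
    intro k hk
    by_cases h : k = bot
    · rw [h, hw0]
    · exact (hwpos k hk h).le
  have hsumK : Summable (K.indicator w) := summable_subtype_iff_indicator.mp hsum
  have key : ∀ x y : α, u x y = 1 - Fw w (SK K x ∩ SK K y) := by
    intro x y
    rw [hu x y, tsum_subtype]
    rfl
  have uxx : ∀ x : α, u x x = 1 - Fw w (SK K x) := by
    intro x
    rw [key x x, Set.inter_self]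
  have hinterK : ∀ x y : α, SK K x ∩ SK K y ⊆ K := fun x y k hk => hk.1.1
  -- (a1) symmetry
  have ha1 : ∀ x y : α, u x y = u y x := by
    intro x y
    rw [key x y, key y x, Set.inter_comm]
  -- (a6) antitone
  have ha6 : ∀ x x' y : α, x ≤ x' → u x' y ≤ u x y := by
    intro x x' y hxx'
    rw [key x y, key x' y]
    have h1 : Fw w (SK K x ∩ SK K y) ≤ Fw w (SK K x' ∩ SK K y) :=
      Fw_mono hwnn hsumK
        (Set.inter_subset_inter_left (SK K y) (SK_mono (K := K) hxx')) (hinterK x' y)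
    linarith
  -- (a2)
  have ha2 : ∀ x y : α, u x x ≤ u x y := by
    intro x y
    rw [uxx x, key x y]
    have h1 : Fw w (SK K x ∩ SK K y) ≤ Fw w (SK K x) :=
      Fw_mono hwnn hsumK Set.inter_subset_left (SK_subset (K := K) (x := x))
    linarith
  -- (a3)
  have ha3 : ∀ x y : α, x ≤ y → u x x = u x y := by
    intro x y hxy
    rw [uxx x, key x y, Set.inter_eq_self_of_subset_left (SK_mono hxy)]
  -- (a4)
  have ha4 : ∀ x y : α, ¬ x ≤ y → u x x < u x y := by
    intro x y hxy
    obtain ⟨hne, hdir, hlub⟩ := hK x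
    have hex : ∃ k ∈ SK K x, ¬ k ≤ y := by
      by_contra hcon
      push_neg at hcon
      exact hxy (hlub.2 fun k hk => hcon k hk)
    obtain ⟨k, hkS, hky⟩ := hex
    have hkbot : k ≠ bot := fun h => hky (h ▸ hbot y)
    have hkni : k ∉ SK K x ∩ SK K y := fun h => hky (wb_le h.2.2)
    have h1 : Fw w (SK K x ∩ SK K y) < Fw w (SK K x) :=
      Fw_lt hwnn hsumK Set.inter_subset_left (SK_subset (K := K) (x := x)) hkS hkni
        (hwpos k hkS.1 hkbot)
    rw [uxx x, key x y]
    clear hky hkni hxy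
    linarith
  -- (a5) triangle
  have ha5 : ∀ x y z : α, u x z ≤ u x y + u y z - u y y := by
    intro x y z
    set A := SK K x ∩ SK K y with hA
    set B := SK K y ∩ SK K z with hB
    have hAK : A ⊆ K := hinterK x y
    have hBK : B ⊆ K := hinterK y z
    have h1 : Fw w (A ∪ B) + Fw w (A ∩ B) = Fw w A + Fw w B :=
      Fw_inter_union hwnn hsumK hAK hBK
    have h2 : Fw w (A ∪ B) ≤ Fw w (SK K y) := by
      apply Fw_mono hwnn hsumK _ (SK_subset (K := K) (x := y))
      rintro k (hk | hk)
      · exact hk.2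
      · exact hk.1
    have h3 : Fw w (A ∩ B) ≤ Fw w (SK K x ∩ SK K z) := by
      apply Fw_mono hwnn hsumK _ (hinterK x z)
      rintro k ⟨hk1, hk2⟩
      exact ⟨hk1.1, hk2.2⟩
    rw [key x z, key x y, key y z, uxx y, ← hA, ← hB]
    linarith
  -- (b2) lubs to infima
  have hb2 : ∀ (B : Set α) (y b : α), B.Nonempty → DirectedOn (· ≤ ·) B → IsLUB B b →
      u b y = sInf ((fun x => u x y) '' B) := by
    intro B y b hBne hBdir hBlub
    have hlb : ∀ t ∈ (fun x => u x y) '' B, u b y ≤ t := by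
      rintro t ⟨x, hx, rfl⟩
      exact ha6 x b y (hBlub.1 hx)
    have hne : ((fun x => u x y) '' B).Nonempty := hBne.image _
    have hbdd : BddBelow ((fun x => u x y) '' B) := ⟨u b y, fun t ht => hlb t ht⟩
    refine le_antisymm (le_csInf hne hlb) (le_of_forall_pos_le_add ?_)
    intro ε hε
    -- find x ∈ B with u x y ≤ u b y + ε
    have hUnion : ∀ k ∈ SK K b, ∃ x ∈ B, k ∈ SK K x := by
      rintro k ⟨hkK, hkb⟩
      obtain ⟨d, hdK, hkd, hdb⟩ := interp_s11 hK hkb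
      obtain ⟨x, hxB, hdx⟩ := hdb B hBne hBdir b hBlub le_rfl
      exact ⟨x, hxB, hkK, wb_mono_right hkd hdx⟩
    set g : α → ℝ := (SK K b ∩ SK K y).indicator w with hg
    have hgsum : Summable g := summable_ind hwnn hsumK (hinterK b y)
    have hev : ∃ s : Finset α, Fw w (SK K b ∩ SK K y) - ε < ∑ k ∈ s, g k := by
      have h1 : Fw w (SK K b ∩ SK K y) - ε < Fw w (SK K b ∩ SK K y) := by linarith
      exact (hgsum.hasSum.eventually (eventually_gt_nhds h1)).exists
    obtain ⟨s, hs⟩ := hev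
    set s' : Finset α := s.filter (fun k => k ∈ SK K b ∩ SK K y) with hs'
    have hsum_eq : ∑ k ∈ s', g k = ∑ k ∈ s, g k := by
      apply Finset.sum_filter_of_ne
      intro k hk hgk
      by_contra hcon
      exact hgk (Set.indicator_of_notMem hcon w)
    obtain ⟨x, hxB, hx⟩ := directed_finset_SK hBdir hBne (K := K) s'
      (fun k hk => hUnion k ((Finset.mem_filter.mp hk).2.1))
    refine le_trans (csInf_le hbdd ⟨x, hxB, rfl⟩) ?_
    have hsub : ∀ k ∈ s', k ∈ SK K x ∩ SK K y :=
      fun k hk => ⟨hx k hk, (Finset.mem_filter.mp hk).2.2⟩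
    have h4 : ∑ k ∈ s', g k ≤ Fw w (SK K x ∩ SK K y) := by
      have h5 : ∑ k ∈ s', g k = ∑ k ∈ s', (SK K x ∩ SK K y).indicator w k := by
        apply Finset.sum_congr rfl
        intro k hk
        rw [hg, Set.indicator_of_mem (Finset.mem_filter.mp hk).2,
          Set.indicator_of_mem (hsub k hk)]
      rw [h5]
      exact Summable.sum_le_tsum s' (fun k _ => ind_nonneg hwnn (hinterK x y) k)
        (summable_ind hwnn hsumK (hinterK x y))
    show u x y ≤ u b y + ε
    rw [key x y, key b y]
    rw [hsum_eq] at h4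
    linarith
  refine ⟨ha1, ha2, ha3, ha4, ha5, ha6, hb2, ?_⟩
  -- (c) topologies coincide
  intro U
  constructor
  · rintro ⟨hup, hin⟩ x hxU
    obtain ⟨hne, hdir, hlub⟩ := hK x
    obtain ⟨s, hsS, hsU⟩ := hin _ hne hdir x hlub hxU
    by_cases hsbot : s = bot
    · exact ⟨u x x + 1, by linarith, fun y _ => hup _ (hsbot ▸ hsU) y (hbot y)⟩
    · have hws : 0 < w s := hwpos s hsS.1 hsbot
      refine ⟨u x x + w s, by linarith, ?_⟩
      intro y hy
      simp only [Set.mem_setOf_eq] at hy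
      have hsy : wayBelow s y := by
        by_contra hns
        have hsSK : s ∈ SK K x := hsS
        have hsplit : Fw w (SK K x) = Fw w (SK K x \ {s}) + w s :=
          Fw_diff_singleton hwnn hsumK (SK_subset (K := K) (x := x)) hsSK
        have hle : Fw w (SK K x ∩ SK K y) ≤ Fw w (SK K x \ {s}) := by
          apply Fw_mono hwnn hsumK _ (fun k hk => hk.1.1)
          rintro k ⟨hk1, hk2⟩
          exact ⟨hk1, fun he => hns (Set.mem_singleton_iff.mp he ▸ hk2.2)⟩
        rw [key x y, uxx x] at hy
        linarith
      exact hup s hsU y (wb_le hsy)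
  · intro h
    constructor
    · intro x hxU y hxy
      obtain ⟨ε, hε, hball⟩ := h x hxU
      apply hball
      show u x y < ε
      rw [← ha3 x y hxy]
      exact hε
    · intro S hSne hSdir b hblub hbU
      obtain ⟨ε, hε, hball⟩ := h b hbU
      have hinf : u b b = sInf ((fun x => u x b) '' S) := hb2 S b b hSne hSdir hblub
      have hex : ∃ t ∈ (fun x => u x b) '' S, t < ε :=
        exists_lt_of_csInf_lt (hSne.image _) (by rw [← hinf]; exact hε)
      obtain ⟨t, ⟨x, hxS, rfl⟩, ht⟩ := hex
      refine ⟨x, hxS, hball ?_⟩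
      show u b x < ε
      rwa [ha1 b x]
end

section
/- Let A be a partially ordered set, I a set, and μ a real-valued function on subsets of I with μ(∅) = 0, μ(I) = 1, which is monotone (U ⊆ V implies μ(U) ≤ μ(V)) and modular (μ(U) + μ(V) = μ(U ∩ V) + μ(U ∪ V)). Let Info, Neginfo : A → P(I) satisfy: x ⊑ y if and only if Info(x) ⊆ Info(y); Info(x) ∩ Neginfo(x) = ∅; and x ⊑ y implies Neginfo(x) ⊆ Neginfo(y). Define u(x,y) = 1 − μ(Info(x) ∩ Info(y)) − μ(Neginfo(x) ∩ Neginfo(y)) and l(x,y) = μ(Info(x) ∩ Neginfo(y)) + μ(Info(y) ∩ Neginfo(x)). Then for all x, y, z ∈ A: (1) u(x,y) = u(y,x); (2) u(x,x) ≤ u(x,y); (3) u(x,z) ≤ u(x,y) + u(y,z) − u(y,y) (the Vickers–Matthews triangle inequality); (4) if x ⊑ y then u(x,x) = u(x,y); and (5) l(x,y) ≤ u(x,y). -/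
/-- properties of the relaxed metric induced by a μInfo-structure:
given a normalized monotone modular set function `μ` and maps `Info`, `Neginfo`
satisfying the positive- and negative-information axioms, the upper part
`u(x,y) = 1 − μ(Info x ∩ Info y) − μ(Neginfo x ∩ Neginfo y)` is symmetric, has
small self-distances, satisfies the Vickers–Matthews triangle inequality, is
constant on comparable pairs, and dominates the lower part
`l(x,y) = μ(Info x ∩ Neginfo y) + μ(Info y ∩ Neginfo x)`. -/
theorem stmt13 {A I : Type*} [PartialOrder A]
    (μ : Set I → ℝ)
    (h0 : μ ∅ = 0) (h1 : μ Set.univ = 1)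
    (hmono : ∀ U V : Set I, U ⊆ V → μ U ≤ μ V)
    (hmod : ∀ U V : Set I, μ U + μ V = μ (U ∩ V) + μ (U ∪ V))
    (Info Neginfo : A → Set I)
    (hinfo : ∀ x y : A, x ≤ y ↔ Info x ⊆ Info y)
    (hdisj : ∀ x : A, Info x ∩ Neginfo x = ∅)
    (hneg : ∀ x y : A, x ≤ y → Neginfo x ⊆ Neginfo y)
    (u l : A → A → ℝ)
    (hu : ∀ x y : A, u x y = 1 - μ (Info x ∩ Info y) - μ (Neginfo x ∩ Neginfo y))
    (hl : ∀ x y : A, l x y = μ (Info x ∩ Neginfo y) + μ (Info y ∩ Neginfo x)) :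
    (∀ x y : A, u x y = u y x) ∧
    (∀ x y : A, u x x ≤ u x y) ∧
    (∀ x y z : A, u x z ≤ u x y + u y z - u y y) ∧
    (∀ x y : A, x ≤ y → u x x = u x y) ∧
    (∀ x y : A, l x y ≤ u x y) := by

  have key : ∀ U V W : Set I, μ (U ∩ W) + μ (W ∩ V) ≤ μ (U ∩ V) + μ W := by
    intro U V W
    have hm := hmod (U ∩ W) (W ∩ V)
    have h1 : (U ∩ W) ∩ (W ∩ V) ⊆ U ∩ V := by
      intro i hi; exact ⟨hi.1.1, hi.2.2⟩
    have h2 : (U ∩ W) ∪ (W ∩ V) ⊆ W := by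
      intro i hi; rcases hi with h | h
      · exact h.2
      · exact h.1
    have := hmono _ _ h1
    have := hmono _ _ h2
    linarith
  have mem : ∀ (x : A) (i : I), i ∈ Info x → i ∈ Neginfo x → False := by
    intro x i ha hb
    have : i ∈ (∅ : Set I) := (hdisj x) ▸ ⟨ha, hb⟩
    exact this
  have dadd : ∀ U V : Set I, U ∩ V = ∅ → μ U + μ V = μ (U ∪ V) := by
    intro U V h
    rw [hmod U V, h, h0]; ring
  refine ⟨?_, ?_, ?_, ?_, ?_⟩
  · intro x y
    rw [hu, hu, Set.inter_comm, Set.inter_comm (Neginfo x)]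
  · intro x y
    rw [hu, hu, Set.inter_self, Set.inter_self]
    have := hmono (Info x ∩ Info y) (Info x) Set.inter_subset_left
    have := hmono (Neginfo x ∩ Neginfo y) (Neginfo x) Set.inter_subset_left
    linarith
  · intro x y z
    rw [hu, hu, hu, hu, Set.inter_self, Set.inter_self]
    have hI := key (Info x) (Info z) (Info y)
    have hN := key (Neginfo x) (Neginfo z) (Neginfo y)
    linarith
  · intro x y hxy
    rw [hu, hu, Set.inter_self, Set.inter_self,
      Set.inter_eq_left.mpr ((hinfo x y).mp hxy),
      Set.inter_eq_left.mpr (hneg x y hxy)]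
  · intro x y
    rw [hl, hu]
    set S1 := Info x ∩ Neginfo y with hS1
    set S2 := Info y ∩ Neginfo x with hS2
    set S3 := Info x ∩ Info y with hS3
    set S4 := Neginfo x ∩ Neginfo y with hS4
    have e12 : S1 ∩ S2 = ∅ := by
      rw [Set.eq_empty_iff_forall_notMem]
      rintro i ⟨⟨a, b⟩, ⟨c, d⟩⟩; exact mem y i c b
    have e3 : (S1 ∪ S2) ∩ S3 = ∅ := by
      rw [Set.eq_empty_iff_forall_notMem]
      rintro i ⟨h | h, ⟨c, d⟩⟩
      · exact mem y i d h.2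
      · exact mem x i c h.2
    have e4 : ((S1 ∪ S2) ∪ S3) ∩ S4 = ∅ := by
      rw [Set.eq_empty_iff_forall_notMem]
      rintro i ⟨(h | h) | h, ⟨c, d⟩⟩
      · exact mem x i h.1 c
      · exact mem y i h.1 d
      · exact mem x i h.1 c
    have d12 := dadd S1 S2 e12
    have d3 := dadd (S1 ∪ S2) S3 e3
    have d4 := dadd ((S1 ∪ S2) ∪ S3) S4 e4
    have hle : μ (((S1 ∪ S2) ∪ S3) ∪ S4) ≤ 1 := by
      rw [← h1]; exact hmono _ _ (Set.subset_univ _)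
    linarith
end

section
/- Let A be a coherently continuous dcpo with countable basis K: A is a continuous dcpo with countable basis K such that for any two basic elements k, k' ∈ K the set MUB(k,k') of minimal upper bounds of k and k' is finite, and for every x ∈ A with k ⊑ x and k' ⊑ x there exists k'' ∈ MUB(k,k') with k'' ⊑ x. Then for every x ∈ A the set I_x = {y ∈ A | the pair {x,y} has no upper bound in A} is Scott open. -/
/-- The set of minimal upper bounds of `k` and `k'`. -/
def MUBSet {α : Type*} [Preorder α] (k k' : α) : Set α :=
  {m | k ≤ m ∧ k' ≤ m ∧ ∀ m' : α, k ≤ m' → k' ≤ m' → m' ≤ m → m ≤ m'}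


open Classical in
/-- König's lemma: levels `G n` finite nonempty, every element of level `n+1`
has an `R`-predecessor in level `n`; then there is an infinite `R`-chain. -/
lemma konig_chain {β : Type*} (G : ℕ → Set β) (R : β → β → Prop)
    (hfin : ∀ n, (G n).Finite) (hne : ∀ n, (G n).Nonempty)
    (hstep : ∀ n, ∀ m ∈ G (n + 1), ∃ m' ∈ G n, R m' m) :
    ∃ f : ℕ → β, (∀ n, f n ∈ G n) ∧ ∀ n, R (f n) (f (n + 1)) := by
  classical
  -- parent function
  let p : ℕ → β → β := fun n m =>
    if h : m ∈ G (n + 1) then (hstep n m h).choose else (hne 0).choose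
  have hp : ∀ n m (h : m ∈ G (n + 1)), p n m ∈ G n ∧ R (p n m) m := by
    intro n m h
    simp only [p, dif_pos h]
    obtain ⟨h1, h2⟩ := (hstep n m h).choose_spec
    exact ⟨h1, h2⟩
  -- choices at each level
  let w : ℕ → β := fun n => (hne n).choose
  have hw : ∀ n, w n ∈ G n := fun n => (hne n).choose_spec
  -- iterated ancestor: `it k j m` is the level `j` ancestor of `m`, a level `j + k` element
  let it : ℕ → ℕ → β → β := fun k =>
    Nat.rec (motive := fun _ => ℕ → β → β) (fun _ m => m)
      (fun _ ih j m => p j (ih (j + 1) m)) k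
  have it_succ : ∀ k j m, it (k + 1) j m = p j (it k (j + 1) m) := fun _ _ _ => rfl
  have it_mem : ∀ k j m, m ∈ G (j + k) → it k j m ∈ G j := by
    intro k
    induction k with
    | zero => intro j m h; exact h
    | succ k ih =>
      intro j m h
      have h' : m ∈ G (j + 1 + k) := by rwa [Nat.succ_add]
      exact (hp j _ (ih (j + 1) m h')).1
  -- invariant
  let I : ℕ → β → Set ℕ → Prop := fun j v N =>
    v ∈ G j ∧ N.Infinite ∧ ∀ n ∈ N, j ≤ n ∧ it (n - j) j (w n) = v
  -- base
  have base : ∃ v N, I 0 v N := by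
    haveI : Finite ↥(G 0) := (hfin 0).to_subtype
    have hmem0 : ∀ n, it n 0 (w n) ∈ G 0 := by
      intro n
      exact it_mem n 0 (w n) (by rw [Nat.zero_add]; exact hw n)
    obtain ⟨y, hy⟩ := Finite.exists_infinite_fiber (fun n : ℕ => (⟨it n 0 (w n), hmem0 n⟩ : ↥(G 0)))
    refine ⟨y.1, {n | it n 0 (w n) = y.1}, y.2, ?_, ?_⟩
    · have : Set.Infinite ((fun n : ℕ => (⟨it n 0 (w n), hmem0 n⟩ : ↥(G 0))) ⁻¹' {y}) :=
        Set.infinite_coe_iff.mp hy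
      refine this.mono ?_
      intro n hn
      simpa using congrArg Subtype.val hn
    · intro n hn
      exact ⟨Nat.zero_le n, by simpa [Nat.sub_zero] using hn⟩
  -- step
  have key : ∀ j v N, I j v N → ∃ v' N', I (j + 1) v' N' ∧ R v v' := by
    intro j v N ⟨hvG, hNinf, hN⟩
    set N' : Set ℕ := N \ Set.Iic j with hN'def
    have hN'inf : N'.Infinite := hNinf.diff (Set.finite_Iic j)
    have hN'mem : ∀ n ∈ N', n ∈ N ∧ j + 1 ≤ n := by
      intro n hn
      exact ⟨hn.1, by simpa using hn.2⟩
    haveI : Infinite ↥N' := hN'inf.to_subtype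
    haveI : Finite ↥(G (j + 1)) := (hfin (j + 1)).to_subtype
    have hmem1 : ∀ n : ↥N', it (n.1 - (j + 1)) (j + 1) (w n.1) ∈ G (j + 1) := by
      intro n
      refine it_mem _ _ _ ?_
      rw [Nat.add_sub_cancel' (hN'mem n.1 n.2).2]
      exact hw n.1
    obtain ⟨y, hy⟩ := Finite.exists_infinite_fiber
      (fun n : ↥N' => (⟨it (n.1 - (j + 1)) (j + 1) (w n.1), hmem1 n⟩ : ↥(G (j + 1))))
    set N'' : Set ℕ := {n | ∃ h : n ∈ N', it (n - (j + 1)) (j + 1) (w n) = y.1} with hN''def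
    have hN''inf : N''.Infinite := by
      have h1 : Set.Infinite ((fun n : ↥N' =>
          (⟨it (n.1 - (j + 1)) (j + 1) (w n.1), hmem1 n⟩ : ↥(G (j + 1)))) ⁻¹' {y}) :=
        Set.infinite_coe_iff.mp hy
      have h2 := h1.image (Set.injOn_of_injective Subtype.val_injective)
      refine h2.mono ?_
      rintro _ ⟨⟨n, hn⟩, hmem, rfl⟩
      exact ⟨hn, by simpa using congrArg Subtype.val hmem⟩
    have hN''spec : ∀ n ∈ N'', n ∈ N ∧ j + 1 ≤ n ∧ it (n - (j + 1)) (j + 1) (w n) = y.1 := by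
      rintro n ⟨hn, heq⟩
      exact ⟨(hN'mem n hn).1, (hN'mem n hn).2, heq⟩
    -- get the link R v y.1
    obtain ⟨n0, hn0⟩ := hN''inf.nonempty
    obtain ⟨hn0N, hn0le, hn0eq⟩ := hN''spec n0 hn0
    have hvn0 : it (n0 - j) j (w n0) = v := (hN n0 hn0N).2
    have hsub : n0 - j = (n0 - (j + 1)) + 1 := by omega
    rw [hsub, it_succ, hn0eq] at hvn0
    have hR : R v y.1 := by
      have := (hp j y.1 y.2).2
      rwa [hvn0] at this
    refine ⟨y.1, N'', ⟨y.2, hN''inf, ?_⟩, hR⟩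
    intro n hn
    obtain ⟨_, h1, h2⟩ := hN''spec n hn
    exact ⟨h1, h2⟩
  -- build the chain
  have key' : ∀ j (s : {vN : β × Set ℕ // I j vN.1 vN.2}),
      ∃ t : {vN : β × Set ℕ // I (j + 1) vN.1 vN.2}, R s.1.1 t.1.1 := by
    intro j s
    obtain ⟨v', N', hI, hR⟩ := key j s.1.1 s.1.2 s.2
    exact ⟨⟨(v', N'), hI⟩, hR⟩
  choose step hstepR using key'
  obtain ⟨v0, N0, hI0⟩ := base
  let F : (j : ℕ) → {vN : β × Set ℕ // I j vN.1 vN.2} := fun j =>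
    Nat.rec ⟨(v0, N0), hI0⟩ (fun j s => step j s) j
  refine ⟨fun n => (F n).1.1, fun n => (F n).2.1, fun n => ?_⟩
  exact hstepR n (F n)


lemma cofinal_chain {α : Type*} [Preorder α] (S : Set α) (hc : S.Countable)
    (hne : S.Nonempty) (hdir : DirectedOn (· ≤ ·) S) :
    ∃ c : ℕ → α, (∀ n, c n ∈ S) ∧ (∀ n, c n ≤ c (n + 1)) ∧ ∀ s ∈ S, ∃ n, s ≤ c n := by
  classical
  obtain ⟨e, he⟩ := hc.exists_eq_range hne
  have hmem : ∀ n, e n ∈ S := fun n => he ▸ Set.mem_range_self n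
  have step : ∀ (a : ↥S) (n : ℕ), ∃ b : ↥S, a.1 ≤ b.1 ∧ e n ≤ b.1 := by
    intro a n
    obtain ⟨z, hz, h1, h2⟩ := hdir a.1 a.2 (e n) (hmem n)
    exact ⟨⟨z, hz⟩, h1, h2⟩
  choose g hg1 hg2 using step
  let C : ℕ → ↥S := fun n => Nat.rec ⟨e 0, hmem 0⟩ (fun n a => g a (n + 1)) n
  have hCe : ∀ n, e n ≤ (C n).1 := by
    intro n
    cases n with
    | zero => exact le_refl _
    | succ n => exact hg2 (C n) (n + 1)
  refine ⟨fun n => (C n).1, fun n => (C n).2, fun n => hg1 (C n) (n + 1), ?_⟩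
  intro s hs
  rw [he] at hs
  obtain ⟨n, rfl⟩ := hs
  exact ⟨n, hCe n⟩

/-- in a coherently continuous dcpo with countable basis, every set
`I_x = {y | {x,y} has no upper bound}` is Scott open. -/
theorem stmt16 {α : Type*} [PartialOrder α]
    (hd : IsDcpo α) (K : Set α) (hKc : K.Countable) (hK : IsDomBasis K)
    (hfin : ∀ k ∈ K, ∀ k' ∈ K, (MUBSet k k').Finite)
    (hcoh : ∀ k ∈ K, ∀ k' ∈ K, ∀ x : α, k ≤ x → k' ≤ x →
      ∃ m ∈ MUBSet k k', m ≤ x) :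
    ∀ x : α, ScottOpen (negSet x) := by
  intro x
  classical
  constructor
  · rintro y hy y' hle ⟨z, hxz, hz⟩
    exact hy ⟨z, hxz, hle.trans hz⟩
  · intro S hSne hSdir b hblub hbneg
    by_contra hcon
    push_neg at hcon
    have hcons : ∀ s ∈ S, ∃ z, x ≤ z ∧ s ≤ z := by
      intro s hs
      have h := hcon s hs
      simpa [negSet] using h
    obtain ⟨hAne, hAdir, hAlub⟩ := hK x
    obtain ⟨hBne, hBdir, hBlub⟩ := hK b
    obtain ⟨a, haA, hamono, hacof⟩ :=
      cofinal_chain {k ∈ K | wayBelow k x} (hKc.mono (Set.sep_subset _ _)) hAne hAdir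
    obtain ⟨c, hcB, hcmono, hccof⟩ :=
      cofinal_chain {k ∈ K | wayBelow k b} (hKc.mono (Set.sep_subset _ _)) hBne hBdir
    have haK : ∀ n, a n ∈ K := fun n => (haA n).1
    have hcK : ∀ n, c n ∈ K := fun n => (hcB n).1
    have hax : ∀ n, a n ≤ x := fun n => hAlub.1 (haA n)
    have hzn : ∀ n, ∃ z, x ≤ z ∧ c n ≤ z := by
      intro n
      obtain ⟨s, hs, hcs⟩ := (hcB n).2 S hSne hSdir b hblub le_rfl
      obtain ⟨z, hxz, hsz⟩ := hcons s hs
      exact ⟨z, hxz, hcs.trans hsz⟩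
    let G : ℕ → Set α := fun n =>
      {m | m ∈ MUBSet (a n) (c n) ∧ ∃ z, x ≤ z ∧ c n ≤ z ∧ m ≤ z}
    have hGfin : ∀ n, (G n).Finite := fun n =>
      (hfin _ (haK n) _ (hcK n)).subset (fun m hm => hm.1)
    have hGne : ∀ n, (G n).Nonempty := by
      intro n
      obtain ⟨z, hxz, hcz⟩ := hzn n
      obtain ⟨m, hm, hmz⟩ := hcoh _ (haK n) _ (hcK n) z ((hax n).trans hxz) hcz
      exact ⟨m, hm, z, hxz, hcz, hmz⟩
    have hGstep : ∀ n, ∀ m ∈ G (n + 1), ∃ m' ∈ G n, m' ≤ m := by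
      rintro n m ⟨hmM, z, hxz, hcz, hmz⟩
      obtain ⟨m', hm', hm'm⟩ := hcoh _ (haK n) _ (hcK n) m
        ((hamono n).trans hmM.1) ((hcmono n).trans hmM.2.1)
      exact ⟨m', ⟨hm', z, hxz, (hcmono n).trans hcz, hm'm.trans hmz⟩, hm'm⟩
    obtain ⟨f, hfG, hfchain⟩ := konig_chain G (· ≤ ·) hGfin hGne hGstep
    have hfmono : Monotone f := monotone_nat_of_le_succ hfchain
    have hdirf : DirectedOn (· ≤ ·) (Set.range f) := by
      rintro _ ⟨i, rfl⟩ _ ⟨j, rfl⟩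
      exact ⟨f (max i j), ⟨max i j, rfl⟩,
        hfmono (le_max_left i j), hfmono (le_max_right i j)⟩
    obtain ⟨w, hw⟩ := hd (Set.range f) hdirf
    have hfw : ∀ n, f n ≤ w := fun n => hw.1 ⟨n, rfl⟩
    have haf : ∀ n, a n ≤ f n := fun n => (hfG n).1.1
    have hcf : ∀ n, c n ≤ f n := fun n => (hfG n).1.2.1
    have hxw : x ≤ w := by
      refine hAlub.2 ?_
      intro k hk
      obtain ⟨n, hn⟩ := hacof k hk
      exact hn.trans ((haf n).trans (hfw n))
    have hbw : b ≤ w := by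
      refine hBlub.2 ?_
      intro k hk
      obtain ⟨n, hn⟩ := hccof k hk
      exact hn.trans ((hcf n).trans (hfw n))
    exact hbneg ⟨w, hxw, hbw⟩
end

section
/- Let A be a dcpo with the Scott topology, and for x ∈ A define I_x = {y ∈ A | the pair {x,y} has no upper bound in A} and J_x = {y ∈ A | x ∈ Int(I_y)}, where Int denotes Scott interior. Then J is Scott continuous as a map into the powerset of A: for every nonempty directed set B ⊆ A, J_{⊔B} = ⋃_{b∈B} J_b. -/
/-- in a dcpo, the map `x ↦ J_x = {y | x ∈ Int (I_y)}` is Scott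
continuous into the powerset: it turns least upper bounds of nonempty directed
sets into unions. -/
theorem stmt17 {α : Type*} [PartialOrder α] (hd : IsDcpo α) :
    ∀ B : Set α, B.Nonempty → DirectedOn (· ≤ ·) B → ∀ s : α, IsLUB B s →
      jSet s = ⋃ b ∈ B, jSet b := by
  intro B hB hdir s hlub
  ext y
  simp only [jSet, Set.mem_setOf_eq, Set.mem_iUnion, scottInt, Set.mem_sUnion]
  constructor
  · rintro ⟨U, ⟨hUo, hUsub⟩, hsU⟩
    obtain ⟨b, hbB, hbU⟩ := hUo.2 B hB hdir s hlub hsU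
    exact ⟨b, hbB, U, ⟨hUo, hUsub⟩, hbU⟩
  · rintro ⟨b, hbB, U, ⟨hUo, hUsub⟩, hbU⟩
    exact ⟨U, ⟨hUo, hUsub⟩, hUo.1 b hbU s (hlub.1 hbB)⟩
end
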